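/- arXiv:1010.5288 — 7 statements merged into one kernel-verified Lean document; each statement's English description precedes it below -/
import Mathlib

section
/- For every n ≥ 3 and every v in the alternating group A_n, there exist unique elements v_i ∈ R_i for 3 ≤ i ≤ n such that v = v_3 · v_4 ⋯ v_n (the canonical presentation of v). -/
/-- The set `T(A_n) = {(1 2)(i j) : 1 ≤ i < j ≤ n}` of A-transpositions, viewed inside
`Equiv.Perm (Fin n)` (letter `k` corresponds to `(k-1 : Fin n)`). -/
def ATrans (n : ℕ) : Set (Equiv.Perm (Fin n)) :=
  {v | ∃ (h1 : 1 < n) (i j : Fin n), i < j ∧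
       v = Equiv.swap (⟨0, by omega⟩ : Fin n) ⟨1, h1⟩ * Equiv.swap i j}

/-- Length of a permutation with respect to the generating set `T(A_n)`. -/
noncomputable def alen (n : ℕ) (v : Equiv.Perm (Fin n)) : ℕ :=
  sInf {k | ∃ l : List (Equiv.Perm (Fin n)),
    (∀ x ∈ l, x ∈ ATrans n) ∧ l.length = k ∧ l.prod = v}

/-- `R_i = {(1 2)(j i) : 1 ≤ j < i} ∪ {e}`, viewed as a subset of `Equiv.Perm (Fin n)`
(letter `k` corresponds to `(k-1 : Fin n)`). -/
def Rset (n i : ℕ) : Set (Equiv.Perm (Fin n)) :=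
  {v | v = 1 ∨ ∃ (h1 : 1 < n) (hi : i - 1 < n) (j : Fin n),
    (j : ℕ) + 1 < i ∧
    v = Equiv.swap (⟨0, by omega⟩ : Fin n) ⟨1, h1⟩ * Equiv.swap j ⟨i - 1, hi⟩}

private lemma rset_fixes {n i : ℕ} {g : Equiv.Perm (Fin n)} (hg : g ∈ Rset n i)
    (k : Fin n) (hk : i ≤ (k : ℕ)) : g k = k := by
  rcases hg with rfl | ⟨h1, hi, j, hj, rfl⟩
  · rfl
  · have h2 : 2 ≤ i := by omega
    have e1 : k ≠ j := Fin.ne_of_val_ne (by omega)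
    have e2 : k ≠ ⟨i - 1, hi⟩ := Fin.ne_of_val_ne (by simp; omega)
    have e3 : k ≠ ⟨0, by omega⟩ := Fin.ne_of_val_ne (by simp; omega)
    have e4 : k ≠ ⟨1, h1⟩ := Fin.ne_of_val_ne (by simp; omega)
    simp only [Equiv.Perm.mul_apply]
    rw [Equiv.swap_apply_of_ne_of_ne e1 e2, Equiv.swap_apply_of_ne_of_ne e3 e4]

lemma list_prod_fixes {n : ℕ} (l : List ℕ) (f : ℕ → Equiv.Perm (Fin n)) (k : Fin n)
    (h : ∀ i ∈ l, f i k = k) : ((l.map f).prod) k = k := by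
  induction l with
  | nil => rfl
  | cons a t ih =>
    simp only [List.map_cons, List.prod_cons, Equiv.Perm.mul_apply]
    rw [ih (fun i hi => h i (List.mem_cons_of_mem _ hi)), h a (List.mem_cons_self)]

lemma rset_inv_eq {n m : ℕ} (hm : 2 ≤ m) (hmn : m < n) (h1 : 1 < n) (j : Fin n) :
    (Equiv.swap (⟨0, by omega⟩ : Fin n) ⟨1, h1⟩ * Equiv.swap j ⟨m, hmn⟩)⁻¹ ⟨m, hmn⟩ = j := by
  have e3 : (⟨m, hmn⟩ : Fin n) ≠ ⟨0, by omega⟩ := Fin.ne_of_val_ne (by simp; omega)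
  have e4 : (⟨m, hmn⟩ : Fin n) ≠ ⟨1, h1⟩ := Fin.ne_of_val_ne (by simp; omega)
  simp only [mul_inv_rev, Equiv.swap_inv, Equiv.Perm.mul_apply]
  rw [Equiv.swap_apply_of_ne_of_ne e3 e4, Equiv.swap_apply_right]

lemma rset_det {n m : ℕ} (hm : 2 ≤ m) (hmn : m < n) {g g' : Equiv.Perm (Fin n)}
    (hg : g ∈ Rset n (m+1)) (hg' : g' ∈ Rset n (m+1))
    (h : g⁻¹ ⟨m, hmn⟩ = g'⁻¹ ⟨m, hmn⟩) : g = g' := by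
  rcases hg with rfl | ⟨h1, hi, j, hj, rfl⟩ <;>
    rcases hg' with rfl | ⟨h1', hi', j', hj', rfl⟩
  · rfl
  · exfalso
    rw [inv_one, Equiv.Perm.one_apply] at h
    have : (⟨(m+1) - 1, hi'⟩ : Fin n) = ⟨m, hmn⟩ := by simp
    rw [this, rset_inv_eq hm hmn h1' j'] at h
    apply_fun Fin.val at h; simp at h; omega
  · exfalso
    rw [inv_one, Equiv.Perm.one_apply] at h
    have : (⟨(m+1) - 1, hi⟩ : Fin n) = ⟨m, hmn⟩ := by simp
    rw [this, rset_inv_eq hm hmn h1 j] at h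
    apply_fun Fin.val at h; simp at h; omega
  · have e : (⟨(m+1) - 1, hi⟩ : Fin n) = ⟨m, hmn⟩ := by simp
    have e' : (⟨(m+1) - 1, hi'⟩ : Fin n) = ⟨m, hmn⟩ := by simp
    simp only [e] at h ⊢
    rw [rset_inv_eq hm hmn h1 j, rset_inv_eq hm hmn h1' j'] at h
    subst h; rfl

lemma drop3_range_succ {m : ℕ} (hm : 2 ≤ m) :
    (List.range (m+2)).drop 3 = (List.range (m+1)).drop 3 ++ [m+1] := by
  rw [List.range_succ, List.drop_append_of_le_length (by simp; omega)]

lemma mem_drop3_range {m i : ℕ} (hi : i ∈ (List.range (m+1)).drop 3) : i < m + 1 :=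
  List.mem_range.mp (List.mem_of_mem_drop hi)

lemma aux (n : ℕ) : ∀ m, 2 ≤ m → m ≤ n →
    ∀ v : Equiv.Perm (Fin n), v ∈ alternatingGroup (Fin n) →
    (∀ k : Fin n, m ≤ (k : ℕ) → v k = k) →
    ∃! f : ℕ → Equiv.Perm (Fin n),
      (∀ i, (i < 3 ∨ m < i) → f i = 1) ∧
      (∀ i, 3 ≤ i → i ≤ m → f i ∈ Rset n i) ∧
      (((List.range (m + 1)).drop 3).map f).prod = v := by
  intro m hm
  induction m, hm using Nat.le_induction with
  | base =>
    intro hn2 v hv hfix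
    have h1n : 1 < n := by omega
    set z0 : Fin n := ⟨0, by omega⟩ with hz0
    set z1 : Fin n := ⟨1, h1n⟩ with hz1
    have key2 : ∀ k : Fin n, (k : ℕ) < 2 → ((v k : ℕ)) < 2 := by
      intro k hk
      by_contra h
      push_neg at h
      have h2 := v.injective (hfix (v k) h)
      omega
    have hv1 : v = 1 := by
      have h0 : (v z0 : ℕ) < 2 := key2 z0 (by simp [hz0])
      have h1 : (v z1 : ℕ) < 2 := key2 z1 (by simp [hz1])
      have hne : v z0 ≠ v z1 := v.injective.ne (by simp [hz0, hz1, Fin.ext_iff])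
      have hnev : (v z0 : ℕ) ≠ (v z1 : ℕ) := fun h => hne (Fin.ext h)
      rcases (by omega : (v z0 : ℕ) = 0 ∨ (v z0 : ℕ) = 1) with hA | hA
      · have hv0 : v z0 = z0 := Fin.ext hA
        have hv1' : v z1 = z1 := Fin.ext (show (v z1 : ℕ) = 1 by omega)
        ext k
        rcases lt_or_ge (k : ℕ) 2 with hk | hk
        · interval_cases h : (k : ℕ)
          · have : k = z0 := Fin.ext (by simp [hz0, h])
            rw [this, hv0]; rfl
          · have : k = z1 := Fin.ext (by simp [hz1, h])
            rw [this, hv1']; rfl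
        · rw [hfix k hk]; rfl
      · exfalso
        have hv0 : v z0 = z1 := Fin.ext hA
        have hv1' : v z1 = z0 := Fin.ext (show (v z1 : ℕ) = 0 by omega)
        have hsw : v = Equiv.swap z0 z1 := by
          ext k
          rcases lt_or_ge (k : ℕ) 2 with hk | hk
          · interval_cases h : (k : ℕ)
            · have : k = z0 := Fin.ext (by simp [hz0, h])
              rw [this, hv0, Equiv.swap_apply_left]
            · have : k = z1 := Fin.ext (by simp [hz1, h])
              rw [this, hv1', Equiv.swap_apply_right]
          · rw [hfix k hk, Equiv.swap_apply_of_ne_of_ne]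
            · exact Fin.ne_of_val_ne (by simp [hz0]; omega)
            · exact Fin.ne_of_val_ne (by simp [hz1]; omega)
        rw [Equiv.Perm.mem_alternatingGroup, hsw, Equiv.Perm.sign_swap
          (Fin.ne_of_val_ne (by simp [hz0, hz1]))] at hv
        exact absurd hv (by decide)
    refine ⟨fun _ => 1, ⟨fun i _ => rfl, fun i h3 h2 => by omega, by simp [hv1]⟩, ?_⟩
    intro f2 ⟨h2s, _, _⟩
    funext i
    exact h2s i (by omega)
  | succ m hm ih =>
    intro hmn1 v hv hfix
    have hmn : m < n := hmn1
    have h1n : 1 < n := by omega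
    set M : Fin n := ⟨m, hmn⟩ with hM
    set j : Fin n := v⁻¹ M with hjd
    have hvj : v j = M := Equiv.apply_symm_apply v M
    have hjm : (j : ℕ) ≤ m := by
      by_contra h
      push_neg at h
      have h2 : v j = j := hfix j (by omega)
      rw [hvj] at h2
      apply_fun Fin.val at h2
      simp [hM] at h2
      omega
    set g : Equiv.Perm (Fin n) :=
      if h : (j : ℕ) = m then 1
      else Equiv.swap (⟨0, by omega⟩ : Fin n) ⟨1, h1n⟩ * Equiv.swap j M with hgdef
    have hgR : g ∈ Rset n (m+1) := by
      rw [hgdef]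
      split_ifs with h
      · exact Or.inl rfl
      · exact Or.inr ⟨h1n, by omega, j, by omega, rfl⟩
    have hginv : g⁻¹ M = j := by
      rw [hgdef]
      split_ifs with h
      · simp only [inv_one, Equiv.Perm.one_apply]
        exact (Fin.ext (h.symm ▸ rfl : (j : ℕ) = (M : ℕ))).symm
      · exact rset_inv_eq hm hmn h1n j
    have hgA : g ∈ alternatingGroup (Fin n) := by
      rw [Equiv.Perm.mem_alternatingGroup, hgdef]
      split_ifs with h
      · simp
      · rw [Equiv.Perm.sign_mul, Equiv.Perm.sign_swap (Fin.ne_of_val_ne (by simp)),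
          Equiv.Perm.sign_swap (Fin.ne_of_val_ne (by simp [hM]; omega))]
        decide
    set w := v * g⁻¹ with hw
    have hwA : w ∈ alternatingGroup (Fin n) := mul_mem hv (inv_mem hgA)
    have hwfix : ∀ k : Fin n, m ≤ (k : ℕ) → w k = k := by
      intro k hk
      rcases eq_or_lt_of_le hk with he | hl
      · have hkM : k = M := Fin.ext (by simp [hM]; omega)
        rw [hkM]
        show v (g⁻¹ M) = M
        rw [hginv, hvj]
      · have hfg : g k = k := rset_fixes hgR k (by omega)
        have hfg' : g⁻¹ k = k := by
          conv_lhs => rw [← hfg]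
          exact Equiv.symm_apply_apply g k
        show v (g⁻¹ k) = k
        rw [hfg', hfix k (by omega)]
    obtain ⟨f', ⟨hf's, hf'R, hf'p⟩, hf'u⟩ := ih (by omega) w hwA hwfix
    refine ⟨fun i => if i = m+1 then g else f' i, ⟨?_, ?_, ?_⟩, ?_⟩
    · intro i hi
      by_cases h : i = m + 1
      · omega
      · simp only [if_neg h]
        exact hf's i (by omega)
    · intro i h3 hle
      by_cases h : i = m + 1
      · subst h; simpa using hgR
      · simp only [if_neg h]; exact hf'R i h3 (by omega)
    · rw [show m + 1 + 1 = m + 2 from rfl, drop3_range_succ hm, List.map_append,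
        List.prod_append]
      have e1 : ((List.range (m+1)).drop 3).map (fun i => if i = m+1 then g else f' i)
          = ((List.range (m+1)).drop 3).map f' := by
        apply List.map_congr_left
        intro i hi
        have := mem_drop3_range hi
        simp [show i ≠ m + 1 by omega]
      rw [e1, hf'p]
      simp [hw]
    · intro f2 ⟨h2s, h2R, h2p⟩
      set g2 := f2 (m+1) with hg2d
      have hg2R : g2 ∈ Rset n (m+1) := h2R (m+1) (by omega) le_rfl
      set w2 := (((List.range (m+1)).drop 3).map f2).prod with hw2d
      have h2p' : w2 * g2 = v := by
        rw [show m + 1 + 1 = m + 2 from rfl, drop3_range_succ hm, List.map_append,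
          List.prod_append] at h2p
        rw [hw2d, hg2d]
        simpa using h2p
      have hw2fix : ∀ k : Fin n, m ≤ (k : ℕ) → w2 k = k := by
        intro k hk
        apply list_prod_fixes
        intro i hi
        have him := mem_drop3_range hi
        by_cases hi3 : i < 3
        · rw [h2s i (Or.inl hi3)]; rfl
        · exact rset_fixes (h2R i (by omega) (by omega)) k (by omega)
      have hg2inv : g2⁻¹ M = j := by
        have hMw2 : w2 M = M := hw2fix M (by simp [hM])
        have hMw2' : w2⁻¹ M = M := by
          conv_lhs => rw [← hMw2]
          exact Equiv.symm_apply_apply w2 M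
        rw [hjd, ← h2p']
        simp only [mul_inv_rev, Equiv.Perm.mul_apply]
        rw [hMw2']
      have hg2g : g2 = g := rset_det hm hmn hg2R hgR (by rw [hg2inv, hginv])
      have hw2w : w2 = w := by
        rw [hw, ← h2p', hg2g]
        group
      have hu := hf'u (fun i => if i = m+1 then 1 else f2 i) ⟨?_, ?_, ?_⟩
      · funext i
        by_cases h : i = m + 1
        · subst h
          simp only [if_pos rfl]
          exact hg2g
        · have h2 : (if i = m+1 then (1 : Equiv.Perm (Fin n)) else f2 i) = f' i :=
            congrFun hu i
          simp only [if_neg h] at h2 ⊢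
          exact h2
      · intro i hi
        by_cases h : i = m + 1
        · simp [h]
        · simp only [if_neg h]
          exact h2s i (by omega)
      · intro i h3 him
        simp only [if_neg (show i ≠ m + 1 by omega)]
        exact h2R i h3 (by omega)
      · rw [← hw2w, hw2d]
        apply congrArg
        apply List.map_congr_left
        intro i hi
        have := mem_drop3_range hi
        simp [show i ≠ m + 1 by omega]


/-- For every `n ≥ 3` and every `v ∈ A_n` there exist unique `v_i ∈ R_i` (`3 ≤ i ≤ n`)
with `v = v_3 * v_4 * ⋯ * v_n` (the canonical presentation of `v`). The factors are
encoded as a function `f : ℕ → Equiv.Perm (Fin n)` which equals `1` outside `[3, n]`. -/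
theorem stmt_1 (n : ℕ) (hn : 3 ≤ n) (v : Equiv.Perm (Fin n))
    (hv : v ∈ alternatingGroup (Fin n)) :
    ∃! f : ℕ → Equiv.Perm (Fin n),
      (∀ i, (i < 3 ∨ n < i) → f i = 1) ∧
      (∀ i, 3 ≤ i → i ≤ n → f i ∈ Rset n i) ∧
      (((List.range (n + 1)).drop 3).map f).prod = v := by
  exact aux n n (by omega) le_rfl v hv (fun k hk => absurd k.isLt (by omega))
end

section
/- For every n ≥ 3 and every v ∈ A_n, if v = v_3 · v_4 ⋯ v_n is the canonical presentation of v (with v_i ∈ R_i for 3 ≤ i ≤ n), then the number of indices i with v_i ≠ e equals ℓ(v), the length of v with respect to the generating set T(A_n). -/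
open Equiv Module


open Equiv Module

section LinAlg
variable {n : ℕ}

/-- The fixed subspace of a permutation acting on `Fin n → ℚ`. -/
def FixS (n : ℕ) (x : Equiv.Perm (Fin n)) : Submodule ℚ (Fin n → ℚ) where
  carrier := {f | ∀ y, f (x y) = f y}
  add_mem' := by intro a b ha hb y; simp [ha y, hb y]
  zero_mem' := by intro y; rfl
  smul_mem' := by intro c a ha y; simp [ha y]

lemma mem_FixS {x : Equiv.Perm (Fin n)} {f : Fin n → ℚ} :
    f ∈ FixS n x ↔ ∀ y, f (x y) = f y := Iff.rfl

/-- Dimension of the fixed subspace. -/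
noncomputable def dd (n : ℕ) (x : Equiv.Perm (Fin n)) : ℕ := finrank ℚ (FixS n x)

def phiL (n : ℕ) (a b : Fin n) : (Fin n → ℚ) →ₗ[ℚ] ℚ :=
  (LinearMap.proj a : (Fin n → ℚ) →ₗ[ℚ] ℚ) - (LinearMap.proj b : (Fin n → ℚ) →ₗ[ℚ] ℚ)

lemma phiL_apply (a b : Fin n) (f : Fin n → ℚ) : phiL n a b f = f a - f b := by
  simp [phiL]

lemma ker_domRestrict_eq (S : Submodule ℚ (Fin n → ℚ)) (φ : (Fin n → ℚ) →ₗ[ℚ] ℚ) :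
    LinearMap.ker (φ.domRestrict S) = (S ⊓ LinearMap.ker φ).comap S.subtype := by
  ext g
  simp [LinearMap.mem_ker, Submodule.mem_comap, g.2]

lemma finrank_le_inf_ker (S : Submodule ℚ (Fin n → ℚ)) (φ : (Fin n → ℚ) →ₗ[ℚ] ℚ) :
    finrank ℚ S ≤ finrank ℚ ↥(S ⊓ LinearMap.ker φ) + 1 := by
  have h := LinearMap.finrank_range_add_finrank_ker (φ.domRestrict S)
  have heq : finrank ℚ ↥(LinearMap.ker (φ.domRestrict S))
      = finrank ℚ ↥(S ⊓ LinearMap.ker φ) := by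
    rw [ker_domRestrict_eq]
    exact (Submodule.comapSubtypeEquivOfLe inf_le_left).finrank_eq
  have hr : finrank ℚ ↥(LinearMap.range (φ.domRestrict S)) ≤ 1 := by
    simpa using Submodule.finrank_le (LinearMap.range (φ.domRestrict S))
  omega

lemma finrank_eq_inf_ker (S : Submodule ℚ (Fin n → ℚ)) (φ : (Fin n → ℚ) →ₗ[ℚ] ℚ)
    (f : Fin n → ℚ) (hfS : f ∈ S) (hf : φ f ≠ 0) :
    finrank ℚ S = finrank ℚ ↥(S ⊓ LinearMap.ker φ) + 1 := by
  have h := LinearMap.finrank_range_add_finrank_ker (φ.domRestrict S)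
  have heq : finrank ℚ ↥(LinearMap.ker (φ.domRestrict S))
      = finrank ℚ ↥(S ⊓ LinearMap.ker φ) := by
    rw [ker_domRestrict_eq]
    exact (Submodule.comapSubtypeEquivOfLe inf_le_left).finrank_eq
  have hsurj : Function.Surjective (φ.domRestrict S) := by
    intro c
    refine ⟨(c / φ f) • ⟨f, hfS⟩, ?_⟩
    simp [LinearMap.domRestrict_apply, div_mul_cancel₀ _ hf]
  have hrt : LinearMap.range (φ.domRestrict S) = ⊤ := LinearMap.range_eq_top.mpr hsurj
  have hr : finrank ℚ ↥(LinearMap.range (φ.domRestrict S)) = 1 := by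
    rw [hrt, finrank_top]
    simp
  omega

end LinAlg

section DD
variable {n : ℕ}

lemma FixS_inf_le (x : Equiv.Perm (Fin n)) (a b : Fin n) :
    FixS n x ⊓ LinearMap.ker (phiL n a b) ≤ FixS n (x * Equiv.swap a b) := by
  intro f hf
  obtain ⟨h1, h2⟩ := Submodule.mem_inf.mp hf
  have hab : f a = f b := by
    have := LinearMap.mem_ker.mp h2
    rw [phiL_apply] at this
    linarith
  intro y
  rw [Equiv.Perm.mul_apply]
  rcases eq_or_ne y a with rfl | hya
  · rw [Equiv.swap_apply_left, h1 b, hab]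
  · rcases eq_or_ne y b with rfl | hyb
    · rw [Equiv.swap_apply_right, h1 a, hab]
    · rw [Equiv.swap_apply_of_ne_of_ne hya hyb, h1 y]

lemma dd_le_swap (x : Equiv.Perm (Fin n)) (a b : Fin n) :
    dd n x ≤ dd n (x * Equiv.swap a b) + 1 :=
  (finrank_le_inf_ker _ (phiL n a b)).trans
    (Nat.add_le_add_right (Submodule.finrank_mono (FixS_inf_le x a b)) 1)

lemma dd_swap_eq (x : Equiv.Perm (Fin n)) {p j : Fin n} (hp : x p = p) (hjp : j ≠ p) :
    dd n x = dd n (x * Equiv.swap j p) + 1 := by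
  have hsub : FixS n (x * Equiv.swap j p) = FixS n x ⊓ LinearMap.ker (phiL n j p) := by
    refine le_antisymm ?_ (FixS_inf_le x j p)
    intro f hf
    have hpj : f p = f j := by
      have := hf j
      rwa [Equiv.Perm.mul_apply, Equiv.swap_apply_left, hp] at this
    have h1 : ∀ y, f (x y) = f y := by
      intro y
      rcases eq_or_ne y j with rfl | hyj
      · have h := hf p
        rw [Equiv.Perm.mul_apply, Equiv.swap_apply_right] at h
        rw [h, hpj]
      · rcases eq_or_ne y p with rfl | hyp
        · rw [hp]
        · have := hf y
          rwa [Equiv.Perm.mul_apply, Equiv.swap_apply_of_ne_of_ne hyj hyp] at this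
    refine Submodule.mem_inf.mpr ⟨h1, LinearMap.mem_ker.mpr ?_⟩
    rw [phiL_apply]
    linarith
  have hw : (fun y => if y = p then (1:ℚ) else 0) ∈ FixS n x := by
    intro y
    by_cases h : y = p
    · subst h; simp [hp]
    · have hxy : x y ≠ p := fun hc => h (x.injective (hc.trans hp.symm))
      simp [h, hxy]
  have hphi : phiL n j p (fun y => if y = p then (1:ℚ) else 0) ≠ 0 := by
    rw [phiL_apply]
    simp [hjp]
  rw [dd, dd, hsub]
  exact finrank_eq_inf_ker _ _ _ hw hphi

lemma dd_one : dd n (1 : Equiv.Perm (Fin n)) = n := by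
  have h : FixS n 1 = ⊤ := by
    ext f
    simp [mem_FixS]
  rw [dd, h, finrank_top]
  simp [Module.finrank_fintype_fun_eq_card]

end DD


section Main
variable {n : ℕ}

noncomputable def DD (n : ℕ) (h1 : 1 < n) (x : Equiv.Perm (Fin n)) : ℕ :=
  dd n x + dd n (x * Equiv.swap (⟨0, by omega⟩ : Fin n) ⟨1, h1⟩)

lemma DD_one (h1 : 1 < n) : DD n h1 1 + 1 = 2 * n := by
  have h0 : ((⟨0, by omega⟩ : Fin n)) ≠ (⟨1, h1⟩ : Fin n) := by
    simp [Fin.ext_iff]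
  have h := dd_swap_eq (1 : Equiv.Perm (Fin n)) (p := ⟨1, h1⟩) (j := ⟨0, by omega⟩) rfl h0
  have h2 := dd_one (n := n)
  rw [DD]
  omega

lemma DD_mul_le (h1 : 1 < n) (x t : Equiv.Perm (Fin n)) (ht : t ∈ ATrans n) :
    DD n h1 x ≤ DD n h1 (x * t) + 2 := by
  obtain ⟨h1', i, j, hij, rfl⟩ := ht
  set s : Equiv.Perm (Fin n) := Equiv.swap (⟨0, by omega⟩ : Fin n) ⟨1, h1⟩ with hs
  have e1 : x * (s * Equiv.swap i j) = (x * s) * Equiv.swap i j := by rw [mul_assoc]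
  have e2 : x * (s * Equiv.swap i j) * s = x * Equiv.swap (s i) (s j) := by
    have : Equiv.swap (s i) (s j) = s * Equiv.swap i j * s⁻¹ :=
      Equiv.swap_apply_apply s i j
    rw [this, Equiv.swap_inv]
    group
    rfl
  have d1 : dd n (x * s) ≤ dd n ((x * s) * Equiv.swap i j) + 1 := dd_le_swap _ _ _
  have d2 : dd n x ≤ dd n (x * Equiv.swap (s i) (s j)) + 1 := dd_le_swap _ _ _
  rw [← e2] at d2
  rw [← e1] at d1
  rw [DD, DD, ← hs]
  omega

lemma canon_step (h1 : 1 < n) (i : ℕ) (hi3 : 3 ≤ i) (hin : i ≤ n)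
    (u : Equiv.Perm (Fin n)) (hu : u ∈ Rset n i) (x : Equiv.Perm (Fin n))
    (hx : ∀ y : Fin n, i - 1 ≤ (y : ℕ) → x y = y) :
    (u = 1 ∧ DD n h1 (x * u) = DD n h1 x) ∨ (u ≠ 1 ∧ DD n h1 x = DD n h1 (x * u) + 2) := by
  rcases hu with h | ⟨h1', hi, j, hj, rfl⟩
  · left; subst h; simp
  · right
    set s : Equiv.Perm (Fin n) := Equiv.swap (⟨0, by omega⟩ : Fin n) ⟨1, h1⟩ with hs
    set p : Fin n := ⟨i - 1, hi⟩ with hpdef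
    have hpval : (p : ℕ) = i - 1 := rfl
    have hp2 : 2 ≤ (p : ℕ) := by omega
    have hjval : (j : ℕ) < i - 1 := by omega
    have hjp : j ≠ p := by
      simp [Fin.ext_iff, hpval]; omega
    have hsp : s p = p := by
      rw [hs]
      refine Equiv.swap_apply_of_ne_of_ne ?_ ?_ <;> · simp [Fin.ext_iff]; omega
    have hsjp : s j ≠ p := by
      intro hc
      have : j = s p := by
        rw [← hc, hs, Equiv.swap_apply_self]
      rw [hsp] at this
      exact hjp this
    have hxp : x p = p := hx p (by omega)
    have hxsp : (x * s) p = p := by rw [Equiv.Perm.mul_apply, hsp, hxp]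
    have hne : s * Equiv.swap j p ≠ 1 := by
      intro hc
      have : (s * Equiv.swap j p) p = p := by rw [hc]; rfl
      rw [Equiv.Perm.mul_apply, Equiv.swap_apply_right] at this
      exact hsjp this
    refine ⟨hne, ?_⟩
    have e1 : x * (s * Equiv.swap j p) = (x * s) * Equiv.swap j p := by rw [mul_assoc]
    have e2 : x * (s * Equiv.swap j p) * s = x * Equiv.swap (s j) p := by
      have h3 : Equiv.swap (s j) (s p) = s * Equiv.swap j p * s⁻¹ :=
        Equiv.swap_apply_apply s j p
      rw [hsp] at h3
      rw [h3, Equiv.swap_inv]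
      group
      rfl
    have d1 : dd n (x * s) = dd n ((x * s) * Equiv.swap j p) + 1 := dd_swap_eq _ hxsp hjp
    have d2 : dd n x = dd n (x * Equiv.swap (s j) p) + 1 := dd_swap_eq _ hxp hsjp
    rw [← e2] at d2
    rw [← e1] at d1
    rw [DD, DD, ← hs]
    omega

lemma word_bound (h1 : 1 < n) (l : List (Equiv.Perm (Fin n)))
    (hl : ∀ t ∈ l, t ∈ ATrans n) :
    2 * n ≤ DD n h1 l.prod + 2 * l.length + 1 := by
  induction l using List.reverseRecOn with
  | nil =>
    simpa using (DD_one h1).ge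
  | append_singleton l t ih =>
    have ih' := ih (fun x hx => hl x (by simp [hx]))
    have ht := hl t (by simp)
    have hstep := DD_mul_le h1 l.prod t ht
    rw [List.prod_append, List.prod_singleton, List.length_append]
    simp only [List.length_singleton]
    omega

end Main

section Chain
variable {n : ℕ}

lemma Rset_fix {i : ℕ} {u : Equiv.Perm (Fin n)} (hu : u ∈ Rset n i) (hi3 : 3 ≤ i)
    (y : Fin n) (hy : i ≤ (y : ℕ)) : u y = y := by
  rcases hu with h | ⟨h1, hi, j, hj, rfl⟩
  · rw [h]; rfl
  · rw [Equiv.Perm.mul_apply]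
    have h2 : y ≠ j := by simp [Fin.ext_iff]; omega
    have h3 : y ≠ ⟨i - 1, hi⟩ := by simp [Fin.ext_iff]; omega
    rw [Equiv.swap_apply_of_ne_of_ne h2 h3]
    refine Equiv.swap_apply_of_ne_of_ne ?_ ?_ <;> · simp [Fin.ext_iff]; omega

lemma Rset_mem_ATrans {i : ℕ} {u : Equiv.Perm (Fin n)} (hu : u ∈ Rset n i)
    (hi3 : 3 ≤ i) (hu1 : u ≠ 1) : u ∈ ATrans n := by
  rcases hu with h | ⟨h1, hi, j, hj, rfl⟩
  · exact absurd h hu1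
  · exact ⟨h1, j, ⟨i - 1, hi⟩, by rw [Fin.lt_def]; simpa using by omega, rfl⟩

lemma chain (hn : 3 ≤ n) (h1 : 1 < n) (f : ℕ → Equiv.Perm (Fin n))
    (hf : ∀ i, 3 ≤ i → i ≤ n → f i ∈ Rset n i) :
    ∀ m, m + 2 ≤ n →
      (∀ y : Fin n, m + 2 ≤ (y : ℕ) →
        ((((List.range (n+1)).drop 3).take m).map f).prod y = y) ∧
      DD n h1 ((((List.range (n+1)).drop 3).take m).map f).prod
        + 2 * ((Finset.Icc 3 (m+2)).filter (fun i => f i ≠ 1)).card + 1 = 2 * n ∧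
      ∃ l : List (Equiv.Perm (Fin n)), (∀ t ∈ l, t ∈ ATrans n) ∧
        l.length = ((Finset.Icc 3 (m+2)).filter (fun i => f i ≠ 1)).card ∧
        l.prod = ((((List.range (n+1)).drop 3).take m).map f).prod := by
  intro m
  induction m with
  | zero =>
    intro _
    have hIcc : Finset.Icc 3 2 = (∅ : Finset ℕ) := Finset.Icc_eq_empty (by omega)
    simp only [List.take_zero, List.map_nil, List.prod_nil, hIcc, Finset.filter_empty,
      Finset.card_empty]
    refine ⟨fun y _ => rfl, by simpa using DD_one h1, [], by simp, by simp, by simp⟩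
  | succ m ih =>
    intro hm
    obtain ⟨hfix, hDD, l, hl, hlen, hlprod⟩ := ih (by omega)
    have hmlt : m < ((List.range (n+1)).drop 3).length := by
      simp [List.length_drop, List.length_range]; omega
    have hget : ((List.range (n+1)).drop 3)[m] = m + 3 := by
      simp [List.getElem_drop, List.getElem_range]; omega
    have htake : ((List.range (n+1)).drop 3).take (m+1)
        = ((List.range (n+1)).drop 3).take m ++ [m+3] := by
      rw [List.take_succ, List.getElem?_eq_getElem hmlt, hget]
      rfl
    have hPsucc : ((((List.range (n+1)).drop 3).take (m+1)).map f).prod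
        = ((((List.range (n+1)).drop 3).take m).map f).prod * f (m + 3) := by
      rw [htake]
      simp
    have hfm : f (m+3) ∈ Rset n (m+3) := hf _ (by omega) (by omega)
    have hfix' : ∀ y : Fin n, m + 3 ≤ (y : ℕ) →
        ((((List.range (n+1)).drop 3).take (m+1)).map f).prod y = y := by
      intro y hy
      rw [hPsucc, Equiv.Perm.mul_apply, Rset_fix hfm (by omega) y (by omega)]
      exact hfix y (by omega)
    have hIcc : Finset.Icc 3 (m+3) = insert (m+3) (Finset.Icc 3 (m+2)) := by
      ext a
      simp [Finset.mem_Icc]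
      omega
    have hnm : (m+3) ∉ Finset.Icc 3 (m+2) := by simp
    rcases canon_step h1 (m+3) (by omega) (by omega) (f (m+3)) hfm
        ((((List.range (n+1)).drop 3).take m).map f).prod
        (fun y hy => hfix y (by omega)) with ⟨hu1, hDDeq⟩ | ⟨hu1, hDDeq⟩
    · have hcard : ((Finset.Icc 3 (m+3)).filter (fun i => f i ≠ 1)).card
          = ((Finset.Icc 3 (m+2)).filter (fun i => f i ≠ 1)).card := by
        rw [hIcc, Finset.filter_insert, if_neg (by simp [hu1])]
      refine ⟨hfix', ?_, l, hl, by rw [hcard]; exact hlen, ?_⟩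
      · rw [hPsucc, hcard, hDDeq]
        exact hDD
      · rw [hPsucc, hu1, mul_one]
        exact hlprod
    · have hcard : ((Finset.Icc 3 (m+3)).filter (fun i => f i ≠ 1)).card
          = ((Finset.Icc 3 (m+2)).filter (fun i => f i ≠ 1)).card + 1 := by
        rw [hIcc, Finset.filter_insert, if_pos hu1,
          Finset.card_insert_of_notMem (fun h => hnm (Finset.mem_filter.mp h).1)]
      refine ⟨hfix', ?_, l ++ [f (m+3)], ?_, ?_, ?_⟩
      · rw [hPsucc, hcard]
        rw [hPsucc] at *
        omega
      · intro t ht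
        rcases List.mem_append.mp ht with h | h
        · exact hl t h
        · rw [List.mem_singleton.mp h]
          exact Rset_mem_ATrans hfm (by omega) hu1
      · rw [List.length_append, hlen, hcard]
        rfl
      · rw [List.prod_append, List.prod_singleton, hlprod, hPsucc]

end Chain


/-- If `v = v_3 ⋯ v_n` is a canonical presentation of `v ∈ A_n` (with `v_i ∈ R_i`),
then the number of indices `i` with `v_i ≠ e` equals the length of `v` w.r.t. `T(A_n)`. -/
theorem stmt_3 (n : ℕ) (hn : 3 ≤ n) (v : Equiv.Perm (Fin n))
    (hv : v ∈ alternatingGroup (Fin n))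
    (f : ℕ → Equiv.Perm (Fin n))
    (hf : ∀ i, 3 ≤ i → i ≤ n → f i ∈ Rset n i)
    (hprod : (((List.range (n + 1)).drop 3).map f).prod = v) :
    ((Finset.Icc 3 n).filter (fun i => f i ≠ 1)).card = alen n v := by
  have h1 : 1 < n := by omega
  obtain ⟨hfix, hDD, l, hl, hlen, hlprod⟩ := chain hn h1 f hf (n - 2) (by omega)
  have htake : ((List.range (n+1)).drop 3).take (n-2) = (List.range (n+1)).drop 3 := by
    apply List.take_of_length_le
    simp
  have hicc : n - 2 + 2 = n := by omega
  rw [htake, hprod] at hDD hlprod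
  rw [hicc] at hDD hlen
  have hmem : ((Finset.Icc 3 n).filter (fun i => f i ≠ 1)).card ∈
      {k | ∃ l : List (Equiv.Perm (Fin n)),
        (∀ x ∈ l, x ∈ ATrans n) ∧ l.length = k ∧ l.prod = v} := ⟨l, hl, hlen, hlprod⟩
  have upper := Nat.sInf_le hmem
  obtain ⟨l', hl', hlen', hlprod'⟩ := Nat.sInf_mem ⟨_, hmem⟩
  have lower := word_bound h1 l' hl'
  rw [hlprod', hlen'] at lower
  have halen : alen n v = sInf {k | ∃ l : List (Equiv.Perm (Fin n)),
      (∀ x ∈ l, x ∈ ATrans n) ∧ l.length = k ∧ l.prod = v} := rfl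
  rw [halen] at *
  omega
end

section
/- For every n ≥ 4 and every m with 1 ≤ m ≤ n-2, the Stirling-type recursion a(n,m) = (n-1)·a(n-1,m-1) + a(n-1,m) holds; moreover a(n,0) = 1 for all n ≥ 0 and a(n,n) = 0 for all n > 0. -/
open Equiv Equiv.Perm Module LinearMap

set_option linter.unusedSectionVars false


/-- `a(n,m)`: the number of elements of `A_n` of length `m` w.r.t. `T(A_n)`. -/
noncomputable def aCount (n m : ℕ) : ℕ :=
  Nat.card {v : Equiv.Perm (Fin n) // v ∈ alternatingGroup (Fin n) ∧ alen n v = m}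

namespace StirlingA


variable {α : Type*} [DecidableEq α] [Fintype α]

def gens (a b : α) : Set (Perm α) :=
  {v | ∃ i j : α, i ≠ j ∧ v = Equiv.swap a b * Equiv.swap i j}

def wordSet (a b : α) (v : Perm α) : Set ℕ :=
  {k | ∃ l : List (Perm α), (∀ x ∈ l, x ∈ gens a b) ∧ l.length = k ∧ l.prod = v}

noncomputable def glen (a b : α) (v : Perm α) : ℕ := sInf (wordSet a b v)

def fixSub (a b : α) (v : Perm α) : Submodule ℚ (α → ℚ) where
  carrier := {u | (∀ x, u (v x) = u x) ∧ u a = u b}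
  add_mem' := by
    intro u w hu hw
    exact ⟨fun x => by simp [hu.1 x, hw.1 x], by simp [hu.2, hw.2]⟩
  zero_mem' := ⟨fun x => rfl, rfl⟩
  smul_mem' := by
    intro c u hu
    exact ⟨fun x => by simp [hu.1 x], by simp [hu.2]⟩

lemma mem_fixSub {a b : α} {v : Perm α} {u : α → ℚ} :
    u ∈ fixSub a b v ↔ (∀ x, u (v x) = u x) ∧ u a = u b := Iff.rfl

noncomputable def fdim (a b : α) (v : Perm α) : ℕ := finrank ℚ (fixSub a b v)

noncomputable def fval (a b : α) (v : Perm α) : ℕ := Fintype.card α - 1 - fdim a b v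

lemma fixSub_one (a b : α) : fixSub a b (1 : Perm α) = ker ((proj a : (α → ℚ) →ₗ[ℚ] ℚ) - proj b) := by
  ext u
  simp [mem_fixSub, sub_eq_zero, eq_comm]

lemma fdim_one (a b : α) (hab : a ≠ b) : fdim a b (1 : Perm α) = Fintype.card α - 1 := by
  classical
  set φ : (α → ℚ) →ₗ[ℚ] ℚ := (proj a : (α → ℚ) →ₗ[ℚ] ℚ) - proj b with hφ
  have hsurj : Function.Surjective φ := by
    intro c
    refine ⟨fun x => if x = a then c else 0, ?_⟩
    simp [hφ, hab.symm]
  have h1 : finrank ℚ (range φ) = 1 := by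
    rw [LinearMap.range_eq_top.2 hsurj, finrank_top]
    simp
  have h2 := LinearMap.finrank_range_add_finrank_ker φ
  rw [Module.finrank_fintype_fun_eq_card, h1] at h2
  rw [fdim, fixSub_one]
  show finrank ℚ (LinearMap.ker φ) = _
  omega

-- helper: invariance of u under a swap
lemma swap_eval {u : α → ℚ} {i j : α} (h : u i = u j) (x : α) : u (Equiv.swap i j x) = u x := by
  rcases eq_or_ne x i with rfl | hxi
  · rw [Equiv.swap_apply_left, h]
  rcases eq_or_ne x j with rfl | hxj
  · rw [Equiv.swap_apply_right, h]
  · rw [Equiv.swap_apply_of_ne_of_ne hxi hxj]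

lemma fixSub_le_one (a b : α) (v : Perm α) : fixSub a b v ≤ fixSub a b 1 := by
  intro u hu
  exact ⟨fun x => rfl, hu.2⟩

lemma fdim_le (a b : α) (v : Perm α) (hab : a ≠ b) :
    fdim a b v ≤ Fintype.card α - 1 := by
  rw [← fdim_one a b hab]
  exact Submodule.finrank_mono (fixSub_le_one a b v)

lemma one_le_fdim (a b : α) (v : Perm α) : 1 ≤ fdim a b v := by
  have h1 : ((fun _ => (1:ℚ)) : α → ℚ) ∈ fixSub a b v := ⟨fun x => rfl, rfl⟩
  have hne : ((fun _ => (1:ℚ)) : α → ℚ) ≠ 0 := by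
    intro h
    have := congrFun h a
    norm_num at this
  have : Nontrivial (fixSub a b v) := by
    refine ⟨⟨⟨_, h1⟩, 0, ?_⟩⟩
    simp [Subtype.ext_iff, hne]
  exact Module.finrank_pos_iff (R := ℚ) (M := fixSub a b v) |>.mpr this

lemma fixSub_mul_swap (a b : α) (v : Perm α) :
    fixSub a b (v * Equiv.swap a b) = fixSub a b v := by
  ext u
  simp only [mem_fixSub, Equiv.Perm.mul_apply]
  constructor
  · rintro ⟨h1, h2⟩
    refine ⟨fun x => ?_, h2⟩
    have := h1 (Equiv.swap a b x)
    rwa [Equiv.swap_apply_self, swap_eval h2] at this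
  · rintro ⟨h1, h2⟩
    exact ⟨fun x => by rw [h1, swap_eval h2], h2⟩

lemma incl1 (a b i j : α) (v : Perm α) :
    fixSub a b v ⊓ fixSub i j 1 ≤ fixSub a b (v * (Equiv.swap a b * Equiv.swap i j)) := by
  rintro u ⟨⟨h1, h2⟩, ⟨-, h3⟩⟩
  refine ⟨fun x => ?_, h2⟩
  simp only [Equiv.Perm.mul_apply]
  rw [h1, swap_eval h2, swap_eval h3]

lemma incl2 (a b i j : α) (v : Perm α) :
    fixSub a b (v * (Equiv.swap a b * Equiv.swap i j)) ⊓ fixSub i j 1 ≤ fixSub a b v := by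
  rintro u ⟨⟨h1, h2⟩, ⟨-, h3⟩⟩
  refine ⟨fun x => ?_, h2⟩
  have := h1 (Equiv.swap i j (Equiv.swap a b x))
  simp only [Equiv.Perm.mul_apply, Equiv.swap_apply_self] at this
  rwa [swap_eval h3, swap_eval h2] at this

lemma finrank_le_inf_add_one (K : Submodule ℚ (α → ℚ)) {i j : α} (hij : i ≠ j) :
    finrank ℚ K ≤ finrank ℚ (K ⊓ fixSub i j 1 : Submodule ℚ (α → ℚ)) + 1 := by
  have hsum := Submodule.finrank_sup_add_finrank_inf_eq K (fixSub i j 1)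
  have hW : finrank ℚ (fixSub i j 1 : Submodule ℚ (α → ℚ)) = Fintype.card α - 1 :=
    fdim_one i j hij
  have hsup : finrank ℚ (K ⊔ fixSub i j 1 : Submodule ℚ (α → ℚ)) ≤ Fintype.card α := by
    have := Submodule.finrank_le (K ⊔ fixSub i j 1 : Submodule ℚ (α → ℚ))
    rwa [Module.finrank_fintype_fun_eq_card] at this
  have hK : finrank ℚ (fixSub i j 1 : Submodule ℚ (α → ℚ)) ≤ Fintype.card α := by
    have := Submodule.finrank_le (fixSub i j 1 : Submodule ℚ (α → ℚ))
    rwa [Module.finrank_fintype_fun_eq_card] at this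
  have hcard : 1 ≤ Fintype.card α := Fintype.card_pos_iff.mpr ⟨i⟩
  omega

lemma fdim_mul_gen_le (a b : α) (v t : Perm α) (ht : t ∈ gens a b) :
    fdim a b (v * t) ≤ fdim a b v + 1 ∧ fdim a b v ≤ fdim a b (v * t) + 1 := by
  obtain ⟨i, j, hij, rfl⟩ := ht
  constructor
  · calc fdim a b (v * (Equiv.swap a b * Equiv.swap i j))
        ≤ finrank ℚ ((fixSub a b (v * (Equiv.swap a b * Equiv.swap i j)))
            ⊓ fixSub i j 1 : Submodule ℚ (α → ℚ)) + 1 := finrank_le_inf_add_one _ hij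
      _ ≤ fdim a b v + 1 := by
          exact Nat.add_le_add_right (Submodule.finrank_mono (incl2 a b i j v)) 1
  · calc fdim a b v
        ≤ finrank ℚ ((fixSub a b v) ⊓ fixSub i j 1 : Submodule ℚ (α → ℚ)) + 1 :=
          finrank_le_inf_add_one _ hij
      _ ≤ fdim a b (v * (Equiv.swap a b * Equiv.swap i j)) + 1 :=
          Nat.add_le_add_right (Submodule.finrank_mono (incl1 a b i j v)) 1

lemma fval_one (a b : α) (hab : a ≠ b) : fval a b (1 : Perm α) = 0 := by
  rw [fval, fdim_one a b hab]
  omega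

lemma fval_list (a b : α) (hab : a ≠ b) (l : List (Perm α)) (hl : ∀ x ∈ l, x ∈ gens a b) :
    fval a b l.prod ≤ l.length := by
  induction l using List.reverseRecOn with
  | nil => simp [fval_one a b hab]
  | append_singleton l t ih =>
    have hmem : ∀ x ∈ l, x ∈ gens a b := fun x hx => hl x (by simp [hx])
    have ht : t ∈ gens a b := hl t (by simp)
    have hb := fdim_mul_gen_le a b l.prod t ht
    have h1 := fdim_le a b l.prod hab
    have h2 := fdim_le a b (l.prod * t) hab
    have := ih hmem
    rw [List.prod_append, List.prod_singleton, List.length_append, List.length_singleton]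
    simp only [fval] at *
    omega

section Helpers

variable {M N : Type*} [AddCommGroup M] [Module ℚ M] [AddCommGroup N] [Module ℚ N]

lemma finrank_eq_of_iff [FiniteDimensional ℚ M] (e : M ≃ₗ[ℚ] N) (p : Submodule ℚ M)
    (q : Submodule ℚ N) (h : ∀ x, x ∈ p ↔ e x ∈ q) : finrank ℚ p = finrank ℚ q := by
  have hq : q = p.map (e : M →ₗ[ℚ] N) := by
    ext y
    constructor
    · intro hy
      exact ⟨e.symm y, (h _).2 (by simpa using hy), by simp⟩
    · rintro ⟨x, hx, rfl⟩
      exact (h x).1 hx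
  rw [hq]
  exact (LinearEquiv.finrank_map_eq e p).symm

/-- product of submodules is a product -/
def prodSubEquiv (K : Submodule ℚ M) (q : Submodule ℚ N) : (K.prod q) ≃ₗ[ℚ] K × q where
  toFun x := (⟨x.1.1, x.2.1⟩, ⟨x.1.2, x.2.2⟩)
  invFun y := ⟨(y.1.1, y.2.1), y.1.2, y.2.2⟩
  map_add' _ _ := rfl
  map_smul' _ _ := rfl
  left_inv _ := rfl
  right_inv _ := rfl

lemma finrank_prodSub [FiniteDimensional ℚ M] [FiniteDimensional ℚ N]
    (K : Submodule ℚ M) (q : Submodule ℚ N) :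
    finrank ℚ (K.prod q) = finrank ℚ K + finrank ℚ q := by
  rw [LinearEquiv.finrank_eq (prodSubEquiv K q), Module.finrank_prod]

end Helpers

lemma fdim_permCongr {β : Type*} [DecidableEq β] [Fintype β] (σ : α ≃ β) (a b : α)
    (v : Perm α) : fdim (σ a) (σ b) (σ.permCongr v) = fdim a b v := by
  apply finrank_eq_of_iff (LinearEquiv.funCongrLeft ℚ ℚ σ)
  intro U
  simp only [mem_fixSub, LinearEquiv.funCongrLeft_apply, LinearMap.funLeft_apply,
    Equiv.permCongr_apply]
  constructor
  · rintro ⟨h1, h2⟩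
    refine ⟨fun x => ?_, h2⟩
    have := h1 (σ x)
    rwa [σ.symm_apply_apply] at this
  · rintro ⟨h1, h2⟩
    refine ⟨fun y => ?_, h2⟩
    have := h1 (σ.symm y)
    rwa [σ.apply_symm_apply] at this

lemma fval_permCongr {β : Type*} [DecidableEq β] [Fintype β] (σ : α ≃ β) (a b : α)
    (v : Perm α) : fval (σ a) (σ b) (σ.permCongr v) = fval a b v := by
  rw [fval, fval, fdim_permCongr, Fintype.card_congr σ]

/-- `(Option α → ℚ) ≃ₗ (α → ℚ) × ℚ` -/
def optionArrowEquiv : (Option α → ℚ) ≃ₗ[ℚ] (α → ℚ) × ℚ where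
  toFun U := (fun x => U (some x), U none)
  invFun p := fun o => o.elim p.2 p.1
  map_add' _ _ := rfl
  map_smul' _ _ := rfl
  left_inv U := by
    funext o
    cases o <;> rfl
  right_inv p := rfl

@[simp] lemma optionArrowEquiv_apply (U : Option α → ℚ) :
    (optionArrowEquiv U : (α → ℚ) × ℚ) = (fun x => U (some x), U none) := rfl

/-- the shear `(V, c) ↦ (V, c - V i)` -/
def shearEquiv (i : α) : ((α → ℚ) × ℚ) ≃ₗ[ℚ] ((α → ℚ) × ℚ) where
  toFun p := (p.1, p.2 - p.1 i)
  invFun p := (p.1, p.2 + p.1 i)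
  map_add' p q := by
    ext
    · rfl
    · simp
      ring
  map_smul' c p := by
    ext
    · rfl
    · simp
      ring
  left_inv p := by simp
  right_inv p := by simp

lemma fdim_optionCongr (a b : α) (u : Perm α) :
    fdim (some a) (some b) (Equiv.optionCongr u) = fdim a b u + 1 := by
  rw [fdim, fdim]
  have := finrank_eq_of_iff (M := Option α → ℚ) optionArrowEquiv
    (fixSub (some a) (some b) (Equiv.optionCongr u)) ((fixSub a b u).prod ⊤) ?_
  · rw [this, finrank_prodSub]
    simp
  intro U
  simp only [mem_fixSub, Submodule.mem_prod, Submodule.mem_top, and_true]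
  constructor
  · rintro ⟨h1, h2⟩
    exact ⟨fun x => h1 (some x), h2⟩
  · rintro ⟨h1, h2⟩
    have h1' : ∀ x, U (some (u x)) = U (some x) := h1
    refine ⟨fun z => ?_, h2⟩
    cases z with
    | none => rfl
    | some x => exact h1' x

lemma fdim_swap_mul_optionCongr (a b i : α) (u : Perm α) :
    fdim (some a) (some b) (Equiv.swap none (some i) * Equiv.optionCongr u) = fdim a b u := by
  rw [fdim, fdim]
  have := finrank_eq_of_iff (M := Option α → ℚ)
    (optionArrowEquiv.trans (shearEquiv i))
    (fixSub (some a) (some b) (Equiv.swap none (some i) * Equiv.optionCongr u))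
    ((fixSub a b u).prod ⊥) ?_
  · rw [this, finrank_prodSub]
    simp
  intro U
  simp only [mem_fixSub, Submodule.mem_prod, Submodule.mem_bot, LinearEquiv.trans_apply]
  show _ ↔ ((fun x => U (some x)) ∈ fixSub a b u ∧ U none - U (some i) = 0)
  have hwnone : (Equiv.swap none (some i) * Equiv.optionCongr u) none = some i := by
    simp
  have hwsome : ∀ x : α, (Equiv.swap none (some i) * Equiv.optionCongr u) (some x)
      = if u x = i then none else some (u x) := by
    intro x
    simp only [Equiv.Perm.mul_apply, Equiv.optionCongr_apply, Option.map_some]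
    rcases eq_or_ne (u x) i with h | h
    · rw [if_pos h, h, Equiv.swap_apply_right]
    · rw [if_neg h, Equiv.swap_apply_of_ne_of_ne (by simp) (by simpa using h)]
  constructor
  · rintro ⟨h1, h2⟩
    have hni : U (some i) = U none := by
      have := h1 none
      rwa [hwnone] at this
    refine ⟨⟨fun x => ?_, h2⟩, by rw [hni]; ring⟩
    show U (some (u x)) = U (some x)
    rcases eq_or_ne (u x) i with h | h
    · have := h1 (some x)
      rw [hwsome x, if_pos h] at this
      rw [h, hni, this]
    · have := h1 (some x)
      rwa [hwsome x, if_neg h] at this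
  · rintro ⟨⟨h1, h2⟩, h3⟩
    have h1' : ∀ x, U (some (u x)) = U (some x) := h1
    have hni : U none = U (some i) := by linarith
    refine ⟨fun z => ?_, h2⟩
    cases z with
    | none => rw [hwnone, hni]
    | some x =>
      rw [hwsome x]
      rcases eq_or_ne (u x) i with h | h
      · rw [if_pos h, hni, ← h, h1' x]
      · rw [if_neg h]
        exact h1' x


section MoreFval

variable {α : Type*} [DecidableEq α] [Fintype α]

lemma fval_mul_swap (a b : α) (v : Perm α) :
    fval a b (v * Equiv.swap a b) = fval a b v := by
  rw [fval, fval, fdim, fdim, fixSub_mul_swap]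

lemma fval_optionCongr (a b : α) (hab : a ≠ b) (u : Perm α) :
    fval (some a) (some b) (Equiv.optionCongr u) = fval a b u := by
  rw [fval, fval, fdim_optionCongr, Fintype.card_option]
  have := fdim_le a b u hab
  omega

lemma fval_swap_mul (a b i : α) (hab : a ≠ b) (u : Perm α) :
    fval (some a) (some b) (Equiv.swap none (some i) * Equiv.optionCongr u)
      = fval a b u + 1 := by
  rw [fval, fval, fdim_swap_mul_optionCongr, Fintype.card_option]
  have := fdim_le a b u hab
  have := one_le_fdim a b u
  omega

lemma eq_one_of_fval_eq_zero {a b : α} (hab : a ≠ b) {v : Perm α}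
    (hsign : Equiv.Perm.sign v = 1) (h0 : fval a b v = 0) : v = 1 := by
  classical
  have hle := fdim_le a b v hab
  have hcard : 2 ≤ Fintype.card α := by
    have : ({a, b} : Finset α).card = 2 := by rw [Finset.card_insert_of_notMem (by simpa using hab), Finset.card_singleton]
    rw [← this]
    exact Finset.card_le_card (Finset.subset_univ _)
  have hge : Fintype.card α - 1 ≤ fdim a b v := by
    rw [fval] at h0
    omega
  have heq : fixSub a b v = fixSub a b 1 := by
    apply Submodule.eq_of_le_of_finrank_le (fixSub_le_one a b v)
    calc finrank ℚ (fixSub a b (1 : Perm α)) = Fintype.card α - 1 := fdim_one a b hab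
    _ ≤ finrank ℚ (fixSub a b v) := hge
  have hmem : ∀ u : α → ℚ, u a = u b → (∀ x, u (v x) = u x) := by
    intro u hu
    have : u ∈ fixSub a b v := by
      rw [heq]
      exact ⟨fun x => rfl, hu⟩
    exact this.1
  -- v fixes every x ∉ {a, b}
  have hfix : ∀ x : α, x ≠ a → x ≠ b → v x = x := by
    intro x hxa hxb
    have h1 := hmem (Pi.single x 1) (by
      rw [Pi.single_apply, Pi.single_apply, if_neg (Ne.symm hxa), if_neg (Ne.symm hxb)])
    have h2 := h1 (v⁻¹ x)
    rw [show v (v⁻¹ x) = x from v.apply_symm_apply x, Pi.single_apply, Pi.single_apply, if_pos rfl] at h2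
    by_cases h : v⁻¹ x = x
    · exact (Equiv.Perm.inv_eq_iff_eq.mp h).symm
    · rw [if_neg h] at h2
      norm_num at h2
  have hab' : v a = a ∨ v b = a := by
    have h1 := hmem (Pi.single a 1 + Pi.single b 1) (by
      simp [Pi.single_apply, hab, hab.symm])
    have h2 := h1 (v⁻¹ a)
    rw [show v (v⁻¹ a) = a from v.apply_symm_apply a] at h2
    simp only [Pi.add_apply, Pi.single_apply] at h2
    rw [if_true, if_neg hab, add_zero] at h2
    by_cases ha : v⁻¹ a = a
    · exact Or.inl (Equiv.Perm.inv_eq_iff_eq.mp ha).symm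
    · by_cases hb : v⁻¹ a = b
      · exact Or.inr (Equiv.Perm.inv_eq_iff_eq.mp hb).symm
      · rw [if_neg ha, if_neg hb] at h2
        norm_num at h2
  rcases hab' with h | h
  · -- v a = a hence v b = b hence v = 1
    have hvb : v b = b := by
      by_contra hvb
      have h1 : v b ≠ a := fun hc => hab (v.injective (by rw [h, hc]))
      have := hfix (v b) h1 hvb
      exact hvb (v.injective this)
    ext x
    rcases eq_or_ne x a with rfl | hxa
    · simpa using h
    rcases eq_or_ne x b with rfl | hxb
    · simpa using hvb
    · simpa using hfix x hxa hxb
  · -- v b = a hence v a = b hence v = swap a b, odd: contradiction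
    have hva : v b = a := h
    have h : v a = b := by
      by_contra hvab
      have h1 : v a ≠ a := fun hc => hab (v.injective (hc.trans hva.symm))
      have h2 := hfix (v a) h1 hvab
      exact h1 (v.injective h2)
    have hv : v = Equiv.swap a b := by
      ext x
      rcases eq_or_ne x a with rfl | hxa
      · rw [h, Equiv.swap_apply_left]
      rcases eq_or_ne x b with rfl | hxb
      · rw [hva, Equiv.swap_apply_right]
      · rw [hfix x hxa hxb, Equiv.swap_apply_of_ne_of_ne hxa hxb]
    rw [hv, Equiv.Perm.sign_swap hab] at hsign
    norm_num at hsign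

lemma fval_le_sub_two (a b : α) (v : Perm α) : fval a b v ≤ Fintype.card α - 2 := by
  have := one_le_fdim a b v
  rw [fval]
  omega

end MoreFval

section Words

variable {α : Type*} [DecidableEq α] [Fintype α]

/-- existence of a word of given bounded length -/
def HasWord (a b : α) (v : Perm α) (L : ℕ) : Prop :=
  ∃ l : List (Perm α), (∀ x ∈ l, x ∈ gens a b) ∧ l.length ≤ L ∧ l.prod = v

lemma hasWord_map {β : Type*} [DecidableEq β] [Fintype β] (φ : Perm α →* Perm β)
    {a b : α} {a' b' : β} (hφ : ∀ t ∈ gens a b, φ t ∈ gens a' b')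
    {v : Perm α} {L : ℕ} (h : HasWord a b v L) : HasWord a' b' (φ v) L := by
  obtain ⟨l, hl, hlen, hprod⟩ := h
  refine ⟨l.map φ, ?_, by simpa using hlen, by rw [← hprod]; exact (map_list_prod φ l).symm⟩
  intro x hx
  obtain ⟨t, ht, rfl⟩ := List.mem_map.1 hx
  exact hφ t (hl t ht)

lemma hasWord_mul_gen {a b : α} {v : Perm α} {L : ℕ} (h : HasWord a b v L)
    {g : Perm α} (hg : g ∈ gens a b) : HasWord a b (v * g) (L + 1) := by
  obtain ⟨l, hl, hlen, hprod⟩ := h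
  refine ⟨l ++ [g], ?_, by simp; omega, by rw [List.prod_append, List.prod_singleton, hprod]⟩
  intro x hx
  rcases List.mem_append.1 hx with hx | hx
  · exact hl x hx
  · simp at hx
    subst hx
    exact hg

/-- `Equiv.permCongr` as a monoid hom -/
def permCongrHom {β : Type*} (σ : α ≃ β) : Perm α →* Perm β where
  toFun := σ.permCongr
  map_one' := by
    ext x
    simp
  map_mul' p q := by
    ext x
    simp [Equiv.permCongr_apply]

lemma permCongr_swap {β : Type*} [DecidableEq β] (σ : α ≃ β) (x y : α) :
    σ.permCongr (Equiv.swap x y) = Equiv.swap (σ x) (σ y) := by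
  ext z
  rw [Equiv.permCongr_apply]
  rcases eq_or_ne z (σ x) with rfl | hx
  · rw [Equiv.swap_apply_left, Equiv.symm_apply_apply, Equiv.swap_apply_left]
  rcases eq_or_ne z (σ y) with rfl | hy
  · rw [Equiv.swap_apply_right, Equiv.symm_apply_apply, Equiv.swap_apply_right]
  · rw [Equiv.swap_apply_of_ne_of_ne hx hy,
      Equiv.swap_apply_of_ne_of_ne (fun h => hx (by rw [← h, Equiv.apply_symm_apply]))
        (fun h => hy (by rw [← h, Equiv.apply_symm_apply])),
      Equiv.apply_symm_apply]

lemma permCongr_gens {β : Type*} [DecidableEq β] (σ : α ≃ β) (a b : α) :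
    ∀ t ∈ gens a b, σ.permCongr t ∈ gens (σ a) (σ b) := by
  rintro t ⟨i, j, hij, rfl⟩
  exact ⟨σ i, σ j, fun h => hij (σ.injective h), by
    rw [show σ.permCongr (Equiv.swap a b * Equiv.swap i j)
      = permCongrHom σ (Equiv.swap a b * Equiv.swap i j) from rfl, map_mul]
    simp only [permCongrHom, MonoidHom.coe_mk, OneHom.coe_mk]
    rw [permCongr_swap, permCongr_swap]⟩

/-- `Equiv.optionCongr` as a monoid hom -/
def optionCongrHom : Perm α →* Perm (Option α) where
  toFun := Equiv.optionCongr
  map_one' := Equiv.optionCongr_one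
  map_mul' p q := by
    ext x
    cases x <;> simp [Equiv.Perm.mul_apply]

lemma optionCongr_gens (a b : α) :
    ∀ t ∈ gens a b, Equiv.optionCongr t ∈ gens (some a : Option α) (some b) := by
  rintro t ⟨i, j, hij, rfl⟩
  refine ⟨some i, some j, by simpa using hij, ?_⟩
  rw [show Equiv.optionCongr (Equiv.swap a b * Equiv.swap i j)
    = optionCongrHom (Equiv.swap a b * Equiv.swap i j) from rfl, map_mul]
  simp only [optionCongrHom, MonoidHom.coe_mk, OneHom.coe_mk]
  rw [Equiv.optionCongr_swap, Equiv.optionCongr_swap]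

lemma swap_mul_eq (f : Perm α) (x y : α) :
    Equiv.swap x y * f = f * Equiv.swap (f⁻¹ x) (f⁻¹ y) := by
  rw [Equiv.swap_apply_apply]
  group

end Words

section UpperBound

lemma perm_fin_two_eq_one (v : Perm (Fin 2)) (hv : Equiv.Perm.sign v = 1) : v = 1 := by
  revert hv
  revert v
  decide

lemma finSuccEquivLast_zero {n : ℕ} :
    (finSuccEquivLast : Fin (n+3) ≃ Option (Fin (n+2))) 0 = some 0 := by
  rw [show (0 : Fin (n+3)) = Fin.castSucc 0 by rw [Fin.castSucc_zero], finSuccEquivLast_castSucc]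

lemma finSuccEquivLast_one {n : ℕ} :
    (finSuccEquivLast : Fin (n+3) ≃ Option (Fin (n+2))) 1 = some 1 := by
  rw [show (1 : Fin (n+3)) = Fin.castSucc 1 by rw [Fin.castSucc_one], finSuccEquivLast_castSucc]

lemma exists_word_fin : ∀ (n : ℕ) (v : Perm (Fin (n+2))), Equiv.Perm.sign v = 1 →
    HasWord (0 : Fin (n+2)) 1 v (fval (0 : Fin (n+2)) 1 v) := by
  intro n
  induction n with
  | zero =>
    intro v hv
    rw [perm_fin_two_eq_one v hv]
    exact ⟨[], fun x hx => absurd hx List.not_mem_nil, by simp, List.prod_nil⟩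
  | succ n ih =>
    intro v hv
    have σ : Fin (n+3) ≃ Option (Fin (n+2)) := finSuccEquivLast
    set w : Perm (Option (Fin (n+2))) := finSuccEquivLast.permCongr v with hwdef
    have hsw : Equiv.Perm.sign w = 1 := by
      rw [hwdef, Equiv.Perm.sign_permCongr]
      exact hv
    have hfvw : fval (some 0) (some 1) w = fval (0 : Fin (n+3)) 1 v := by
      rw [← finSuccEquivLast_zero (n := n), ← finSuccEquivLast_one (n := n), hwdef,
        fval_permCongr]
    have hback : ∀ L, HasWord (some (0 : Fin (n+2))) (some 1) w L →
        HasWord (0 : Fin (n+3)) 1 v L := by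
      intro L hw
      have := hasWord_map (permCongrHom (finSuccEquivLast (n := n+2)).symm)
        (a' := (finSuccEquivLast (n := n+2)).symm (some 0))
        (b' := (finSuccEquivLast (n := n+2)).symm (some 1))
        (permCongr_gens _ _ _) hw
      have h0 : (finSuccEquivLast (n := n+2)).symm (some 0) = (0 : Fin (n+3)) := by
        rw [← finSuccEquivLast_zero (n := n), Equiv.symm_apply_apply]
      have h1 : (finSuccEquivLast (n := n+2)).symm (some 1) = (1 : Fin (n+3)) := by
        rw [← finSuccEquivLast_one (n := n), Equiv.symm_apply_apply]
      have hvv : permCongrHom (finSuccEquivLast (n := n+2)).symm w = v := by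
        show (finSuccEquivLast (n := n+2)).symm.permCongr (finSuccEquivLast.permCongr v) = v
        ext z
        simp [Equiv.permCongr_apply]
      rwa [h0, h1, hvv] at this
    rcases ho : (Equiv.Perm.decomposeOption w).1 with _ | i
    · -- w = optionCongr u
      have hw : w = Equiv.optionCongr (Equiv.Perm.decomposeOption w).2 := by
        conv_lhs => rw [← Equiv.symm_apply_apply Equiv.Perm.decomposeOption w]
        rw [show Equiv.Perm.decomposeOption w
          = ((Equiv.Perm.decomposeOption w).1, (Equiv.Perm.decomposeOption w).2) from rfl, ho]
        rw [Equiv.Perm.decomposeOption_symm_apply]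
        rw [Equiv.swap_self]
        show (1 : Perm (Option (Fin (n+2)))) * _ = _
        rw [one_mul]
      set u := (Equiv.Perm.decomposeOption w).2 with hudef
      have hsu : Equiv.Perm.sign u = 1 := by
        rw [hw, Equiv.optionCongr_sign] at hsw
        exact hsw
      have hword := hasWord_map optionCongrHom (optionCongr_gens (0 : Fin (n+2)) 1)
        (ih u hsu)
      apply hback
      rw [← hfvw, hw]
      show HasWord _ _ (Equiv.optionCongr u) (fval (some 0) (some 1) (Equiv.optionCongr u))
      rw [fval_optionCongr _ _ Fin.zero_ne_one]
      exact hword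
    · -- w = swap none (some i) * optionCongr u
      have hw : w = Equiv.swap none (some i) * Equiv.optionCongr (Equiv.Perm.decomposeOption w).2 := by
        conv_lhs => rw [← Equiv.symm_apply_apply Equiv.Perm.decomposeOption w]
        rw [show Equiv.Perm.decomposeOption w
          = ((Equiv.Perm.decomposeOption w).1, (Equiv.Perm.decomposeOption w).2) from rfl, ho]
        rw [Equiv.Perm.decomposeOption_symm_apply]
      set u := (Equiv.Perm.decomposeOption w).2 with hudef
      have hsu : Equiv.Perm.sign u = -1 := by
        rw [hw, Equiv.Perm.sign_mul, Equiv.Perm.sign_swap (by simp), Equiv.optionCongr_sign] at hsw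
        have : Equiv.Perm.sign u ≠ 1 := by
          intro h
          rw [h] at hsw
          norm_num at hsw
        rcases Int.units_eq_one_or (Equiv.Perm.sign u) with h | h
        · exact absurd h this
        · exact h
      set u' := u * Equiv.swap (0 : Fin (n+2)) 1 with hu'def
      have hsu' : Equiv.Perm.sign u' = 1 := by
        rw [hu'def, Equiv.Perm.sign_mul, hsu, Equiv.Perm.sign_swap Fin.zero_ne_one]
        norm_num
      have huu : u = u' * Equiv.swap (0 : Fin (n+2)) 1 := by
        rw [hu'def, mul_assoc, Equiv.swap_mul_self, mul_one]
      -- rewrite w = optionCongr u' * g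
      have hkey : w = Equiv.optionCongr u' *
          (Equiv.swap none (some (u'⁻¹ i)) * Equiv.swap (some (0 : Fin (n+2))) (some 1)) := by
        rw [hw, huu]
        rw [show Equiv.optionCongr (u' * Equiv.swap (0 : Fin (n+2)) 1)
          = optionCongrHom u' * optionCongrHom (Equiv.swap (0 : Fin (n+2)) 1) from
            map_mul optionCongrHom _ _]
        show Equiv.swap none (some i) * (Equiv.optionCongr u' * Equiv.optionCongr (Equiv.swap (0 : Fin (n+2)) 1)) = _
        rw [Equiv.optionCongr_swap, ← mul_assoc, swap_mul_eq]
        have hinv : (Equiv.optionCongr u')⁻¹ = Equiv.optionCongr u'⁻¹ :=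
          (map_inv optionCongrHom u').symm ▸ rfl
        have h1 : (Equiv.optionCongr u')⁻¹ none = none := by
          rw [hinv]
          rfl
        have h2 : (Equiv.optionCongr u')⁻¹ (some i) = some (u'⁻¹ i) := by
          rw [hinv]
          rfl
        rw [h1, h2, mul_assoc]
      have hg : Equiv.swap none (some (u'⁻¹ i)) * Equiv.swap (some (0 : Fin (n+2))) (some 1)
          ∈ gens (some (0 : Fin (n+2))) (some 1) := by
        rw [swap_mul_eq]
        have hs : (Equiv.swap (some (0 : Fin (n+2))) (some 1))⁻¹
            = Equiv.swap (some (0 : Fin (n+2))) (some 1) := Equiv.swap_inv _ _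
        have hnone : (Equiv.swap (some (0 : Fin (n+2))) (some 1))⁻¹ none = none := by
          rw [hs, Equiv.swap_apply_of_ne_of_ne (by simp) (by simp)]
        refine ⟨none, (Equiv.swap (some (0 : Fin (n+2))) (some 1))⁻¹ (some (u'⁻¹ i)), ?_, by rw [hnone]⟩
        intro h
        have : (none : Option (Fin (n+2))) = some (u'⁻¹ i) := by
          apply (Equiv.swap (some (0 : Fin (n+2))) (some 1))⁻¹.injective
          rw [hnone, h]
        cases this
      have hword := hasWord_mul_gen
        (hasWord_map optionCongrHom (optionCongr_gens (0 : Fin (n+2)) 1) (ih u' hsu')) hg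
      have hword' : HasWord (some (0 : Fin (n+2))) (some 1)
          (Equiv.optionCongr u' * (Equiv.swap none (some (u'⁻¹ i))
            * Equiv.swap (some (0 : Fin (n+2))) (some 1))) (fval (0 : Fin (n+2)) 1 u' + 1) := hword
      rw [← hkey] at hword'
      apply hback
      have : fval (some (0 : Fin (n+2))) (some 1) w = fval (0 : Fin (n+2)) 1 u' + 1 := by
        rw [hw, fval_swap_mul _ _ _ Fin.zero_ne_one, huu, fval_mul_swap]
      rw [← hfvw, this]
      exact hword'

lemma glen_eq_fval {n : ℕ} (v : Perm (Fin (n+2))) (hv : Equiv.Perm.sign v = 1) :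
    glen (0 : Fin (n+2)) 1 v = fval (0 : Fin (n+2)) 1 v := by
  obtain ⟨l, hl, hlen, hprod⟩ := exists_word_fin n v hv
  have hmem : l.length ∈ wordSet (0 : Fin (n+2)) 1 v := ⟨l, hl, rfl, hprod⟩
  apply le_antisymm
  · exact le_trans (Nat.sInf_le hmem) hlen
  · apply le_csInf ⟨l.length, hmem⟩
    rintro k ⟨l', hl', hlen', hprod'⟩
    rw [← hprod', ← hlen']
    exact fval_list _ _ Fin.zero_ne_one l' hl'

end UpperBound

section Counting

lemma nat_card_sigma {ι : Type*} [Fintype ι] (β : ι → Type*) [∀ i, Finite (β i)] :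
    Nat.card ((i : ι) × β i) = ∑ i, Nat.card (β i) := by
  letI : ∀ i, Fintype (β i) := fun i => Fintype.ofFinite (β i)
  rw [Nat.card_eq_fintype_card, Fintype.card_sigma]
  exact Finset.sum_congr rfl (fun i _ => (Nat.card_eq_fintype_card).symm)

lemma card_odd_eq_card_even (k m : ℕ) :
    Nat.card {u : Perm (Fin (k+2)) // Equiv.Perm.sign u = -1 ∧ fval (0 : Fin (k+2)) 1 u = m}
      = Nat.card {u : Perm (Fin (k+2)) // Equiv.Perm.sign u = 1 ∧ fval (0 : Fin (k+2)) 1 u = m} := by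
  apply Nat.card_congr
  refine Equiv.subtypeEquiv (Equiv.mulRight (Equiv.swap (0 : Fin (k+2)) 1)) ?_
  intro u
  simp only [Equiv.coe_mulRight]
  constructor
  · rintro ⟨h1, h2⟩
    refine ⟨?_, by rw [fval_mul_swap, h2]⟩
    rw [Equiv.Perm.sign_mul, h1, Equiv.Perm.sign_swap Fin.zero_ne_one]
    norm_num
  · rintro ⟨h1, h2⟩
    rw [fval_mul_swap] at h2
    refine ⟨?_, h2⟩
    rw [Equiv.Perm.sign_mul, Equiv.Perm.sign_swap Fin.zero_ne_one] at h1
    rcases Int.units_eq_one_or (Equiv.Perm.sign u) with h | h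
    · rw [h] at h1
      norm_num at h1
    · exact h

lemma fval_finSucc (k : ℕ) (v : Perm (Fin (k+3))) :
    fval (some (0 : Fin (k+2))) (some 1) (finSuccEquivLast.permCongr v)
      = fval (0 : Fin (k+3)) 1 v := by
  rw [← finSuccEquivLast_zero (n := k), ← finSuccEquivLast_one (n := k), fval_permCongr]

lemma decompose_none {α : Type*} [DecidableEq α] (u : Perm α) :
    Equiv.Perm.decomposeOption.symm ((none : Option α), u) = Equiv.optionCongr u := by
  rw [Equiv.Perm.decomposeOption_symm_apply, Equiv.swap_self, ← Equiv.Perm.one_def, one_mul]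

lemma count_rec (k m : ℕ) (hm : 1 ≤ m) :
    Nat.card {v : Perm (Fin (k+3)) // Equiv.Perm.sign v = 1 ∧ fval (0 : Fin (k+3)) 1 v = m}
    = (k+2) * Nat.card {u : Perm (Fin (k+2)) // Equiv.Perm.sign u = 1
        ∧ fval (0 : Fin (k+2)) 1 u = m - 1}
      + Nat.card {u : Perm (Fin (k+2)) // Equiv.Perm.sign u = 1
        ∧ fval (0 : Fin (k+2)) 1 u = m} := by
  classical
  have e1 : {v : Perm (Fin (k+3)) // Equiv.Perm.sign v = 1 ∧ fval (0 : Fin (k+3)) 1 v = m}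
      ≃ {w : Perm (Option (Fin (k+2))) // Equiv.Perm.sign w = 1
          ∧ fval (some (0 : Fin (k+2))) (some 1) w = m} := by
    refine Equiv.subtypeEquiv (Equiv.permCongr finSuccEquivLast) ?_
    intro v
    rw [Equiv.Perm.sign_permCongr, fval_finSucc]
  have e2 : {w : Perm (Option (Fin (k+2))) // Equiv.Perm.sign w = 1
          ∧ fval (some (0 : Fin (k+2))) (some 1) w = m}
      ≃ {p : Option (Fin (k+2)) × Perm (Fin (k+2)) //
          Equiv.Perm.sign (Equiv.Perm.decomposeOption.symm p) = 1
          ∧ fval (some (0 : Fin (k+2))) (some 1) (Equiv.Perm.decomposeOption.symm p) = m} := by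
    refine Equiv.subtypeEquiv Equiv.Perm.decomposeOption ?_
    intro w
    rw [Equiv.symm_apply_apply]
  have e3 : {p : Option (Fin (k+2)) × Perm (Fin (k+2)) //
          Equiv.Perm.sign (Equiv.Perm.decomposeOption.symm p) = 1
          ∧ fval (some (0 : Fin (k+2))) (some 1) (Equiv.Perm.decomposeOption.symm p) = m}
      ≃ ((o : Option (Fin (k+2))) × {u : Perm (Fin (k+2)) //
          Equiv.Perm.sign (Equiv.Perm.decomposeOption.symm (o, u)) = 1
          ∧ fval (some (0 : Fin (k+2))) (some 1) (Equiv.Perm.decomposeOption.symm (o, u)) = m}) := by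
    refine Equiv.trans (Equiv.subtypeEquivRight ?_)
      (Equiv.subtypeProdEquivSigmaSubtype (fun (o : Option (Fin (k+2))) (u : Perm (Fin (k+2))) =>
        Equiv.Perm.sign (Equiv.Perm.decomposeOption.symm (o, u)) = 1
          ∧ fval (some (0 : Fin (k+2))) (some 1) (Equiv.Perm.decomposeOption.symm (o, u)) = m))
    intro p
    exact Iff.rfl
  have hnone : ∀ u : Perm (Fin (k+2)),
      (Equiv.Perm.sign (Equiv.Perm.decomposeOption.symm ((none : Option (Fin (k+2))), u)) = 1
        ∧ fval (some (0 : Fin (k+2))) (some 1)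
            (Equiv.Perm.decomposeOption.symm ((none : Option (Fin (k+2))), u)) = m)
      ↔ (Equiv.Perm.sign u = 1 ∧ fval (0 : Fin (k+2)) 1 u = m) := by
    intro u
    rw [decompose_none, Equiv.optionCongr_sign, fval_optionCongr _ _ Fin.zero_ne_one]
  have hsome : ∀ (i : Fin (k+2)) (u : Perm (Fin (k+2))),
      (Equiv.Perm.sign (Equiv.Perm.decomposeOption.symm (some i, u)) = 1
        ∧ fval (some (0 : Fin (k+2))) (some 1)
            (Equiv.Perm.decomposeOption.symm (some i, u)) = m)
      ↔ (Equiv.Perm.sign u = -1 ∧ fval (0 : Fin (k+2)) 1 u = m - 1) := by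
    intro i u
    have hd : Equiv.Perm.decomposeOption.symm ((some i : Option (Fin (k+2))), u)
        = Equiv.swap none (some i) * Equiv.optionCongr u := rfl
    rw [hd,
      fval_swap_mul _ _ _ Fin.zero_ne_one,
      Equiv.Perm.sign_mul, Equiv.Perm.sign_swap (by simp), Equiv.optionCongr_sign]
    constructor
    · rintro ⟨h1, h2⟩
      constructor
      · rcases Int.units_eq_one_or (Equiv.Perm.sign u) with h | h
        · rw [h] at h1
          norm_num at h1
        · exact h
      · omega
    · rintro ⟨h1, h2⟩
      rw [h1]
      constructor
      · norm_num
      · omega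
  rw [Nat.card_congr (e1.trans (e2.trans e3)), nat_card_sigma, Fintype.sum_option]
  have hn : Nat.card {u : Perm (Fin (k+2)) //
      Equiv.Perm.sign (Equiv.Perm.decomposeOption.symm ((none : Option (Fin (k+2))), u)) = 1
      ∧ fval (some (0 : Fin (k+2))) (some 1)
          (Equiv.Perm.decomposeOption.symm ((none : Option (Fin (k+2))), u)) = m}
      = Nat.card {u : Perm (Fin (k+2)) // Equiv.Perm.sign u = 1
          ∧ fval (0 : Fin (k+2)) 1 u = m} :=
    Nat.card_congr (Equiv.subtypeEquivRight hnone)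
  have hs : ∀ i : Fin (k+2), Nat.card {u : Perm (Fin (k+2)) //
      Equiv.Perm.sign (Equiv.Perm.decomposeOption.symm (some i, u)) = 1
      ∧ fval (some (0 : Fin (k+2))) (some 1)
          (Equiv.Perm.decomposeOption.symm (some i, u)) = m}
      = Nat.card {u : Perm (Fin (k+2)) // Equiv.Perm.sign u = 1
          ∧ fval (0 : Fin (k+2)) 1 u = m - 1} := by
    intro i
    rw [Nat.card_congr (Equiv.subtypeEquivRight (hsome i)), card_odd_eq_card_even]
  rw [hn, Finset.sum_congr rfl (fun i _ => hs i), Finset.sum_const, Finset.card_univ,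
    Fintype.card_fin, smul_eq_mul]
  ring

end Counting

section Glue

lemma mk_zero_eq (k : ℕ) (h : 0 < k+2) : (⟨0, h⟩ : Fin (k+2)) = 0 := by
  apply Fin.ext
  simp

lemma mk_one_eq (k : ℕ) (h : 1 < k+2) : (⟨1, h⟩ : Fin (k+2)) = 1 := by
  apply Fin.ext
  rw [Fin.val_one]

lemma ATrans_eq (k : ℕ) : ATrans (k+2) = gens (0 : Fin (k+2)) 1 := by
  ext v
  constructor
  · rintro ⟨h1, i, j, hij, rfl⟩
    exact ⟨i, j, hij.ne, by rw [mk_zero_eq, mk_one_eq]⟩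
  · rintro ⟨i, j, hij, rfl⟩
    rcases hij.lt_or_gt with h | h
    · exact ⟨by omega, i, j, h, by rw [mk_zero_eq, mk_one_eq]⟩
    · exact ⟨by omega, j, i, h, by rw [mk_zero_eq, mk_one_eq, Equiv.swap_comm j i]⟩

lemma alen_eq_glen (k : ℕ) (v : Perm (Fin (k+2))) :
    alen (k+2) v = glen (0 : Fin (k+2)) 1 v := by
  unfold alen glen wordSet
  rw [ATrans_eq]

lemma aCount_eq (k m : ℕ) : aCount (k+2) m
    = Nat.card {v : Perm (Fin (k+2)) // Equiv.Perm.sign v = 1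
        ∧ fval (0 : Fin (k+2)) 1 v = m} := by
  unfold aCount
  apply Nat.card_congr
  apply Equiv.subtypeEquivRight
  intro v
  constructor
  · rintro ⟨h1, h2⟩
    have hs : Equiv.Perm.sign v = 1 := Equiv.Perm.mem_alternatingGroup.mp h1
    exact ⟨hs, by rw [← glen_eq_fval v hs, ← alen_eq_glen, h2]⟩
  · rintro ⟨h1, h2⟩
    exact ⟨Equiv.Perm.mem_alternatingGroup.mpr h1,
      by rw [alen_eq_glen, glen_eq_fval v h1, h2]⟩

lemma main_rec (k m : ℕ) (hm : 1 ≤ m) :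
    aCount (k+3) m = (k+2) * aCount (k+2) (m-1) + aCount (k+2) m := by
  have b1 := aCount_eq (k+1) m
  rw [aCount_eq k (m-1), aCount_eq k m]
  exact b1.trans (count_rec k m hm)

lemma alen_one_small (n : ℕ) : alen n 1 = 0 := by
  apply Nat.sInf_eq_zero.mpr
  exact Or.inl ⟨[], fun x hx => absurd hx List.not_mem_nil, rfl, List.prod_nil⟩

lemma aCount_zero (n : ℕ) : aCount n 0 = 1 := by
  rcases Nat.lt_or_ge n 2 with hn | hn
  · -- n ≤ 1 : the permutation group is trivial
    haveI : Subsingleton (Fin n) := by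
      rcases Nat.lt_or_ge n 1 with h | h
      · have : n = 0 := by omega
        subst this
        exact ⟨fun a => a.elim0⟩
      · have : n = 1 := by omega
        subst this
        exact ⟨fun a b => Fin.ext (by omega)⟩
    haveI : Subsingleton (Perm (Fin n)) :=
      ⟨fun a b => Equiv.ext fun x => Subsingleton.elim _ _⟩
    unfold aCount
    haveI : Unique {v : Perm (Fin n) // v ∈ alternatingGroup (Fin n) ∧ alen n v = 0} := by
      refine ⟨⟨1, one_mem _, alen_one_small n⟩, ?_⟩
      intro x
      exact Subtype.ext (Subsingleton.elim _ _)
    exact Nat.card_unique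
  · obtain ⟨k, rfl⟩ : ∃ k, n = k + 2 := ⟨n - 2, by omega⟩
    rw [aCount_eq k 0]
    haveI : Unique {v : Perm (Fin (k+2)) // Equiv.Perm.sign v = 1
        ∧ fval (0 : Fin (k+2)) 1 v = 0} := by
      refine ⟨⟨1, ?_, fval_one 0 1 Fin.zero_ne_one⟩, ?_⟩
      · simp
      · intro x
        apply Subtype.ext
        exact eq_one_of_fval_eq_zero Fin.zero_ne_one x.2.1 x.2.2
    exact Nat.card_unique

lemma aCount_diag (n : ℕ) (hn : 0 < n) : aCount n n = 0 := by
  rcases Nat.lt_or_ge n 2 with hn2 | hn2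
  · have : n = 1 := by omega
    subst this
    unfold aCount
    haveI : Subsingleton (Fin 1) := ⟨fun a b => Fin.ext (by omega)⟩
    haveI : Subsingleton (Perm (Fin 1)) :=
      ⟨fun a b => Equiv.ext fun x => Subsingleton.elim _ _⟩
    haveI : IsEmpty {v : Perm (Fin 1) // v ∈ alternatingGroup (Fin 1) ∧ alen 1 v = 1} := by
      refine ⟨?_⟩
      rintro ⟨v, h1, h2⟩
      rw [Subsingleton.elim v 1, alen_one_small 1] at h2
      exact absurd h2 (by omega)
    exact Nat.card_of_isEmpty
  · obtain ⟨k, rfl⟩ : ∃ k, n = k + 2 := ⟨n - 2, by omega⟩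
    rw [aCount_eq k (k+2)]
    haveI : IsEmpty {v : Perm (Fin (k+2)) // Equiv.Perm.sign v = 1
        ∧ fval (0 : Fin (k+2)) 1 v = k+2} := by
      refine ⟨?_⟩
      rintro ⟨v, h1, h2⟩
      have := fval_le_sub_two (0 : Fin (k+2)) 1 v
      rw [Fintype.card_fin] at this
      omega
    exact Nat.card_of_isEmpty

end Glue

end StirlingA

/-- The Stirling-type recursion `a(n,m) = (n-1)·a(n-1,m-1) + a(n-1,m)` for `n ≥ 4`,
`1 ≤ m ≤ n-2`, together with the boundary conditions `a(n,0) = 1` (`n ≥ 0`) and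
`a(n,n) = 0` (`n > 0`). -/
theorem stmt_6 :
    (∀ n m : ℕ, 4 ≤ n → 1 ≤ m → m ≤ n - 2 →
      aCount n m = (n - 1) * aCount (n - 1) (m - 1) + aCount (n - 1) m) ∧
    (∀ n : ℕ, aCount n 0 = 1) ∧
    (∀ n : ℕ, 0 < n → aCount n n = 0) := by
  refine ⟨?_, StirlingA.aCount_zero, StirlingA.aCount_diag⟩
  intro n m h4 hm1 hm2
  obtain ⟨k, rfl⟩ : ∃ k, n = k + 3 := ⟨n - 3, by omega⟩
  rw [show k+3-1 = k+2 from by omega]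
  exact StirlingA.main_rec k m hm1
end

section
/- For every n ≥ 2 and every v ∈ A_n, the letters 1 and 2 lie in the same cycle of v (i.e., some power of v maps 1 to 2) if and only if ℓ(v) is odd. -/
namespace StmtAux

open Equiv Equiv.Perm Module

variable {n : ℕ}

/-- The linear action of a permutation on `Fin n → ℚ` by precomposition. -/
noncomputable def FF (w : Equiv.Perm (Fin n)) : (Fin n → ℚ) →ₗ[ℚ] (Fin n → ℚ) :=
  LinearMap.funLeft ℚ ℚ ⇑w

/-- `FF w - id` as a linear map. -/
noncomputable def DD (w : Equiv.Perm (Fin n)) : (Fin n → ℚ) →ₗ[ℚ] (Fin n → ℚ) :=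
  FF w - LinearMap.id

lemma DD_apply (w : Equiv.Perm (Fin n)) (g : Fin n → ℚ) (x : Fin n) :
    DD w g x = g (w x) - g x := rfl

/-- The rank invariant: `rk w = rank (FF w - id)`.  This equals the minimal number of
transpositions needed to express `w`. -/
noncomputable def rk (w : Equiv.Perm (Fin n)) : ℕ :=
  finrank ℚ (LinearMap.range (DD w))

lemma FF_apply (w : Equiv.Perm (Fin n)) (g : Fin n → ℚ) (x : Fin n) :
    FF w g x = g (w x) := rfl

lemma rk_one : rk (1 : Equiv.Perm (Fin n)) = 0 := by
  have h : DD (1 : Equiv.Perm (Fin n)) = 0 := by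
    ext g x; simp [DD, FF]
  rw [rk, h, LinearMap.range_zero, finrank_bot]

lemma rk_mul_le (u v : Equiv.Perm (Fin n)) : rk (u * v) ≤ rk u + rk v := by
  classical
  have hdecomp : DD (u * v) = (FF v).comp (DD u) + DD v := by
    ext g x
    simp only [DD, LinearMap.sub_apply, LinearMap.add_apply, LinearMap.comp_apply,
      LinearMap.id_apply, Pi.sub_apply, Pi.add_apply, FF, LinearMap.funLeft_apply,
      Equiv.Perm.mul_apply]
    ring
  have hrange : LinearMap.range (DD (u * v)) ≤
      LinearMap.range ((FF v).comp (DD u)) ⊔ LinearMap.range (DD v) := by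
    rw [hdecomp]
    rintro x ⟨g, rfl⟩
    simp only [LinearMap.add_apply]
    exact Submodule.add_mem_sup (LinearMap.mem_range_self _ g) (LinearMap.mem_range_self _ g)
  have h1 := Submodule.finrank_sup_add_finrank_inf_eq
    (LinearMap.range ((FF v).comp (DD u))) (LinearMap.range (DD v))
  have h2 : finrank ℚ (LinearMap.range ((FF v).comp (DD u))) ≤ rk u := by
    rw [LinearMap.range_comp, rk]
    exact Submodule.finrank_map_le _ _
  have h3 := Submodule.finrank_mono hrange
  have hd1 : rk (u * v) = finrank ℚ (LinearMap.range (DD (u * v))) := rfl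
  have hd2 : rk v = finrank ℚ (LinearMap.range (DD v)) := rfl
  omega

lemma rk_swap_le {a b : Fin n} (hab : a ≠ b) : rk (Equiv.swap a b) ≤ 1 := by
  classical
  have key : ∀ g : Fin n → ℚ, DD (Equiv.swap a b) g
      = (g b - g a) • (Pi.single a 1 - Pi.single b 1) := by
    intro g
    funext x
    simp only [DD, LinearMap.sub_apply, LinearMap.id_apply, Pi.sub_apply, FF,
      LinearMap.funLeft_apply, Pi.smul_apply, smul_eq_mul]
    rcases eq_or_ne x a with rfl | hxa
    · rw [Equiv.swap_apply_left, Pi.single_eq_same, Pi.single_eq_of_ne hab]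
      ring
    · rcases eq_or_ne x b with rfl | hxb
      · rw [Equiv.swap_apply_right, Pi.single_eq_same, Pi.single_eq_of_ne hxa]
        ring
      · rw [Equiv.swap_apply_of_ne_of_ne hxa hxb, Pi.single_eq_of_ne hxa,
          Pi.single_eq_of_ne hxb]
        ring
  have hv : (Pi.single a 1 - Pi.single b 1 : Fin n → ℚ) ≠ 0 := by
    intro h
    have := congrFun h a
    rw [Pi.sub_apply, Pi.single_eq_same, Pi.single_eq_of_ne hab, Pi.zero_apply] at this
    norm_num at this
  have hr : LinearMap.range (DD (Equiv.swap a b)) ≤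
      Submodule.span ℚ {(Pi.single a 1 - Pi.single b 1 : Fin n → ℚ)} := by
    rintro x ⟨g, rfl⟩
    rw [key]
    exact Submodule.smul_mem _ _ (Submodule.mem_span_singleton_self _)
  have := Submodule.finrank_mono hr
  rw [rk]
  have hspan : finrank ℚ
      (Submodule.span ℚ {(Pi.single a 1 - Pi.single b 1 : Fin n → ℚ)}) = 1 :=
    finrank_span_singleton hv
  omega

lemma eq_one_of_rk_eq_zero {w : Equiv.Perm (Fin n)} (h : rk w = 0) : w = 1 := by
  classical
  have hbot : LinearMap.range (DD w) = ⊥ := by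
    rw [rk] at h
    exact Submodule.finrank_eq_zero.mp h
  apply Equiv.ext
  intro x
  by_contra hx
  have hx' : w x ≠ x := by simpa using hx
  have hmem : DD w (Pi.single (w x) (1 : ℚ)) = 0 := by
    have h1 : DD w (Pi.single (w x) (1 : ℚ)) ∈
        LinearMap.range (DD w) := LinearMap.mem_range_self _ _
    rw [hbot] at h1
    simpa using h1
  have := congrFun hmem x
  rw [DD_apply, Pi.single_eq_same, Pi.single_eq_of_ne (Ne.symm hx')] at this
  norm_num at this

lemma mem_ker_iff (u : Equiv.Perm (Fin n)) (g : Fin n → ℚ) :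
    g ∈ LinearMap.ker (DD u) ↔ ∀ x, g (u x) = g x := by
  constructor
  · intro hg x
    have := congrFun (LinearMap.mem_ker.mp hg) x
    rw [DD_apply, Pi.zero_apply, sub_eq_zero] at this
    exact this
  · intro hg
    apply LinearMap.mem_ker.mpr
    funext x
    rw [DD_apply, Pi.zero_apply, sub_eq_zero]
    exact hg x

lemma ker_const {w : Equiv.Perm (Fin n)} {g : Fin n → ℚ} (hg : ∀ x, g (w x) = g x)
    {x y : Fin n} (h : w.SameCycle x y) : g x = g y := by
  obtain ⟨i, -, hi⟩ := h.exists_pow_eq'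
  have key : ∀ j : ℕ, ∀ z, g ((w ^ j) z) = g z := by
    intro j
    induction j with
    | zero => intro z; simp
    | succ j ih =>
      intro z
      rw [pow_succ, Equiv.Perm.mul_apply, ih (w z), hg z]
  rw [← hi, key i x]

/-- Splitting the cycle: after multiplying by `swap a b`, the letters `a` and `b`
are no longer in the same cycle. -/
lemma not_sameCycle_swap_mul {w : Equiv.Perm (Fin n)} {a b : Fin n} (hab : a ≠ b)
    (h : w.SameCycle a b) : ¬ (Equiv.swap a b * w).SameCycle a b := by
  classical
  obtain ⟨i0, -, hi0⟩ := h.exists_pow_eq'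
  have hex : ∃ i : ℕ, (w ^ i) a = b := ⟨i0, hi0⟩
  set m := Nat.find hex with hm
  have hmb : (w ^ m) a = b := Nat.find_spec hex
  have hmin : ∀ j < m, (w ^ j) a ≠ b := fun j hj => Nat.find_min hex hj
  have hm0 : 0 < m := by
    rcases Nat.eq_zero_or_pos m with h0 | h0
    · exfalso; apply hab; rw [← hmb, h0, pow_zero]; rfl
    · exact h0
  set I : Finset (Fin n) := (Finset.range m).image (fun j => (w ^ j) a) with hI
  have haI : a ∈ I := Finset.mem_image.mpr ⟨0, Finset.mem_range.mpr hm0, by simp⟩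
  have hbI : b ∉ I := by
    intro hb
    obtain ⟨j, hj, hjb⟩ := Finset.mem_image.mp hb
    exact hmin j (Finset.mem_range.mp hj) hjb
  have hclosed : ∀ x ∈ I, (Equiv.swap a b * w) x ∈ I := by
    intro x hx
    obtain ⟨j, hj, rfl⟩ := Finset.mem_image.mp hx
    rw [Finset.mem_range] at hj
    have hwx : (Equiv.swap a b * w) ((w ^ j) a) = Equiv.swap a b ((w ^ (j + 1)) a) := by
      have hstep : w ((w ^ j) a) = (w ^ (j + 1)) a := by
        rw [← Equiv.Perm.mul_apply, ← pow_succ']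
      rw [Equiv.Perm.mul_apply, hstep]
    by_cases hjm : j + 1 = m
    · rw [hwx, hjm, hmb, Equiv.swap_apply_right]
      exact haI
    · have hjm' : j + 1 < m := by omega
      have hne_b : (w ^ (j + 1)) a ≠ b := hmin _ hjm' 
      have hne_a : (w ^ (j + 1)) a ≠ a := by
        intro heq
        have hsplit : w ^ m = w ^ (m - (j + 1)) * w ^ (j + 1) := by
          rw [← pow_add]
          congr 1
          omega
        have : (w ^ (m - (j + 1))) a = b := by
          rw [← hmb, hsplit, Equiv.Perm.mul_apply, heq]
        exact hmin _ (by omega) this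
      rw [hwx, Equiv.swap_apply_of_ne_of_ne hne_a hne_b]
      exact Finset.mem_image.mpr ⟨j + 1, Finset.mem_range.mpr hjm', rfl⟩
  have hpow : ∀ i : ℕ, ((Equiv.swap a b * w) ^ i) a ∈ I := by
    intro i
    induction i with
    | zero => simpa using haI
    | succ i ih =>
      rw [pow_succ', Equiv.Perm.mul_apply]
      exact hclosed _ ih
  intro hsc
  obtain ⟨i, -, hi⟩ := hsc.exists_pow_eq'
  exact hbI (hi ▸ hpow i)

/-- Merging the cycles: if `a` and `b` are in different cycles, after multiplying by
`swap a b` they are in the same cycle. -/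
lemma sameCycle_swap_mul {w : Equiv.Perm (Fin n)} {a b : Fin n} (hab : a ≠ b)
    (h : ¬ w.SameCycle a b) : (Equiv.swap a b * w).SameCycle a b := by
  classical
  have hex : ∃ i : ℕ, 0 < i ∧ (w ^ i) a = a := by
    refine ⟨orderOf w, orderOf_pos w, ?_⟩
    rw [pow_orderOf_eq_one]
    rfl
  set k := Nat.find hex with hkdef
  obtain ⟨hk0, hka⟩ := Nat.find_spec hex
  have hkmin : ∀ j < k, ¬(0 < j ∧ (w ^ j) a = a) := fun j hj => Nat.find_min hex hj
  have key : ∀ i, i < k → ((Equiv.swap a b * w) ^ i) a = (w ^ i) a := by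
    intro i
    induction i with
    | zero => intro _; simp
    | succ i ih =>
      intro hik
      have hi : i < k := by omega
      have hne_a : (w ^ (i + 1)) a ≠ a := fun heq => hkmin (i + 1) hik ⟨by omega, heq⟩
      have hne_b : (w ^ (i + 1)) a ≠ b := fun heq =>
        h ⟨((i : ℤ) + 1), by rw [← zpow_natCast w (i + 1)] at heq; simpa using heq⟩
      rw [pow_succ', Equiv.Perm.mul_apply, ih hi, Equiv.Perm.mul_apply,
        ← Equiv.Perm.mul_apply w (w ^ i), ← pow_succ',
        Equiv.swap_apply_of_ne_of_ne hne_a hne_b]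
  have hlast : ((Equiv.swap a b * w) ^ k) a = b := by
    have hk1 : k = (k - 1) + 1 := by omega
    rw [hk1, pow_succ', Equiv.Perm.mul_apply, key (k - 1) (by omega),
      Equiv.Perm.mul_apply, ← Equiv.Perm.mul_apply w (w ^ (k - 1)), ← pow_succ', ← hk1,
      hka, Equiv.swap_apply_left]
  exact ⟨(k : ℤ), by rw [zpow_natCast]; exact hlast⟩

/-- The key inequality: multiplying by `swap a b` with `a, b` in the same cycle
strictly decreases the rank invariant. -/
lemma rk_swap_mul_lt {w : Equiv.Perm (Fin n)} {a b : Fin n} (hab : a ≠ b)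
    (h : w.SameCycle a b) : rk (Equiv.swap a b * w) < rk w := by
  classical
  set s := Equiv.swap a b with hs
  have hnsc : ¬ (s * w).SameCycle a b := not_sameCycle_swap_mul hab h
  have hlt : LinearMap.ker (DD w) < LinearMap.ker (DD (s * w)) := by
    rw [SetLike.lt_iff_le_and_exists]
    constructor
    · intro g hg
      rw [mem_ker_iff] at hg ⊢
      have hgab : g a = g b := ker_const hg h
      have hfix : ∀ y, g (s y) = g y := by
        intro y
        rcases eq_or_ne y a with rfl | hya
        · rw [hs, Equiv.swap_apply_left]; exact hgab.symm
        · rcases eq_or_ne y b with rfl | hyb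
          · rw [hs, Equiv.swap_apply_right]; exact hgab
          · rw [hs, Equiv.swap_apply_of_ne_of_ne hya hyb]
      intro x
      rw [Equiv.Perm.mul_apply, hfix (w x), hg x]
    · refine ⟨fun x => if (s * w).SameCycle a x then (1 : ℚ) else 0, ?_, ?_⟩
      · rw [mem_ker_iff]
        intro x
        by_cases hc : (s * w).SameCycle a x
        · rw [if_pos (Equiv.Perm.sameCycle_apply_right.mpr hc), if_pos hc]
        · rw [if_neg (fun hcc => hc (Equiv.Perm.sameCycle_apply_right.mp hcc)), if_neg hc]
      · intro hmem
        rw [mem_ker_iff] at hmem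
        have h2 : (if (s * w).SameCycle a a then (1 : ℚ) else 0)
            = (if (s * w).SameCycle a b then (1 : ℚ) else 0) :=
          ker_const (g := fun x => if (s * w).SameCycle a x then (1 : ℚ) else 0) hmem h
        rw [if_pos (Equiv.Perm.SameCycle.refl _ _), if_neg hnsc] at h2
        norm_num at h2
  have hd := Submodule.finrank_lt_finrank_of_lt hlt
  have e1 := LinearMap.finrank_range_add_finrank_ker (DD w)
  have e2 := LinearMap.finrank_range_add_finrank_ker (DD (s * w))
  have hd1 : rk w = finrank ℚ (LinearMap.range (DD w)) := rfl
  have hd2 : rk (s * w) = finrank ℚ (LinearMap.range (DD (s * w))) := rfl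
  omega

lemma rk_lt_rk_swap_mul {w : Equiv.Perm (Fin n)} {a b : Fin n} (hab : a ≠ b)
    (h : ¬ w.SameCycle a b) : rk w < rk (Equiv.swap a b * w) := by
  have h2 := rk_swap_mul_lt hab (sameCycle_swap_mul hab h)
  rwa [← mul_assoc, Equiv.swap_mul_self, one_mul] at h2

/-- Every permutation is a product of exactly `rk w` transpositions. -/
lemma exists_swap_list (w : Equiv.Perm (Fin n)) :
    ∃ m : List (Equiv.Perm (Fin n)),
      (∀ x ∈ m, x.IsSwap) ∧ m.length = rk w ∧ m.prod = w := by
  classical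
  suffices H : ∀ N (w : Equiv.Perm (Fin n)), rk w ≤ N →
      ∃ m : List (Equiv.Perm (Fin n)),
        (∀ x ∈ m, x.IsSwap) ∧ m.length = rk w ∧ m.prod = w from H (rk w) w le_rfl
  intro N
  induction N with
  | zero =>
    intro w hw
    have h1 : w = 1 := eq_one_of_rk_eq_zero (Nat.le_zero.mp hw)
    subst h1
    exact ⟨[], by simp, by simp [rk_one], by simp⟩
  | succ N ih =>
    intro w hw
    by_cases h1 : w = 1
    · subst h1
      exact ⟨[], by simp, by simp [rk_one], by simp⟩
    · have hx : ∃ x, w x ≠ x := by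
        by_contra hc
        push_neg at hc
        exact h1 (Equiv.ext hc)
      obtain ⟨x, hx⟩ := hx
      have hsc : w.SameCycle x (w x) := ⟨1, by simp⟩
      have hlt := rk_swap_mul_lt (Ne.symm hx) hsc
      obtain ⟨m, hm1, hm2, hm3⟩ := ih (Equiv.swap x (w x) * w) (by omega)
      have hub : rk w ≤ rk (Equiv.swap x (w x) * w) + 1 := by
        have h4 := rk_mul_le (Equiv.swap x (w x)) (Equiv.swap x (w x) * w)
        rw [← mul_assoc, Equiv.swap_mul_self, one_mul] at h4
        have h5 := rk_swap_le (Ne.symm hx)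
        omega
      refine ⟨Equiv.swap x (w x) :: m, ?_, ?_, ?_⟩
      · intro y hy
        rcases List.mem_cons.mp hy with rfl | hy
        · exact ⟨x, w x, Ne.symm hx, rfl⟩
        · exact hm1 y hy
      · simp only [List.length_cons, hm2]
        omega
      · rw [List.prod_cons, hm3, ← mul_assoc, Equiv.swap_mul_self, one_mul]

lemma rk_prod_le (m : List (Equiv.Perm (Fin n))) (hm : ∀ x ∈ m, Equiv.Perm.IsSwap x) :
    rk m.prod ≤ m.length := by
  induction m with
  | nil => simp [rk_one]
  | cons s m ih =>
    obtain ⟨x, y, hxy, hs⟩ := hm s List.mem_cons_self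
    have h1 := rk_mul_le s m.prod
    have h2 : rk s ≤ 1 := by rw [hs]; exact rk_swap_le hxy
    have h3 := ih (fun z hz => hm z (List.mem_cons_of_mem _ hz))
    rw [List.prod_cons]
    simp only [List.length_cons]
    omega

lemma sign_eq_rk (w : Equiv.Perm (Fin n)) : Equiv.Perm.sign w = (-1) ^ (rk w) := by
  obtain ⟨m, hm1, hm2, hm3⟩ := exists_swap_list w
  have h := Equiv.Perm.sign_prod_list_swap hm1
  rw [hm3, hm2] at h
  exact h

lemma even_iff_of_pow_eq {j k : ℕ} (h : ((-1 : ℤˣ)) ^ j = (-1) ^ k) :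
    (Even j ↔ Even k) := by
  rcases Nat.even_or_odd j with hj | hj <;> rcases Nat.even_or_odd k with hk | hk
  · exact iff_of_true hj hk
  · rw [hj.neg_one_pow, hk.neg_one_pow] at h
    exact absurd h (by decide)
  · rw [hj.neg_one_pow, hk.neg_one_pow] at h
    exact absurd h (by decide)
  · exact iff_of_false (Nat.not_even_iff_odd.mpr hj) (Nat.not_even_iff_odd.mpr hk)

/-- Characterization of which permutations are products of `k` transpositions. -/
lemma wk_iff {a b : Fin n} (hab : a ≠ b) (w : Equiv.Perm (Fin n)) (k : ℕ) :
    (∃ m : List (Equiv.Perm (Fin n)),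
        (∀ x ∈ m, x.IsSwap) ∧ m.length = k ∧ m.prod = w)
      ↔ (rk w ≤ k ∧ (Even k ↔ Even (rk w))) := by
  constructor
  · rintro ⟨m, hm1, rfl, rfl⟩
    refine ⟨rk_prod_le m hm1, even_iff_of_pow_eq ?_⟩
    rw [← Equiv.Perm.sign_prod_list_swap hm1, sign_eq_rk]
  · rintro ⟨hle, hpar⟩
    obtain ⟨m0, h1, h2, h3⟩ := exists_swap_list w
    have hkr : Even (k - rk w) := (Nat.even_sub hle).mpr hpar
    obtain ⟨j, hj⟩ := hkr
    have hpow : Equiv.swap a b ^ (k - rk w) = 1 := by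
      rw [hj, ← two_mul, pow_mul, pow_two, Equiv.swap_mul_self, one_pow]
    refine ⟨m0 ++ List.replicate (k - rk w) (Equiv.swap a b), ?_, ?_, ?_⟩
    · intro x hx
      rcases List.mem_append.mp hx with h | h
      · exact h1 x h
      · rw [List.eq_of_mem_replicate h]
        exact ⟨a, b, hab, rfl⟩
    · rw [List.length_append, List.length_replicate, h2]
      omega
    · rw [List.prod_append, h3, List.prod_replicate, hpow, mul_one]

lemma isSwap_conj {s : Equiv.Perm (Fin n)} (hs : s.IsSwap) (u : Equiv.Perm (Fin n)) :
    (u * s * u⁻¹).IsSwap := by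
  obtain ⟨x, y, hxy, rfl⟩ := hs
  exact ⟨u x, u y, fun h => hxy (u.injective h), (Equiv.swap_apply_apply u x y).symm⟩

lemma word_to_swaps (t : Equiv.Perm (Fin n)) (l : List (Equiv.Perm (Fin n)))
    (hl : ∀ x ∈ l, ∃ s, Equiv.Perm.IsSwap s ∧ x = t * s) :
    ∃ m : List (Equiv.Perm (Fin n)), (∀ x ∈ m, x.IsSwap) ∧ m.length = l.length ∧
      l.prod = t ^ l.length * m.prod := by
  induction l with
  | nil => exact ⟨[], by simp, by simp, by simp⟩
  | cons x l ih =>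
    obtain ⟨s, hs, rfl⟩ := hl x List.mem_cons_self
    obtain ⟨m, hm1, hm2, hm3⟩ := ih (fun y hy => hl y (List.mem_cons_of_mem _ hy))
    refine ⟨((t ^ l.length)⁻¹ * s * t ^ l.length) :: m, ?_, by simp [hm2], ?_⟩
    · intro y hy
      rcases List.mem_cons.mp hy with rfl | hy
      · have := isSwap_conj hs (t ^ l.length)⁻¹
        rwa [inv_inv] at this
      · exact hm1 y hy
    · rw [List.prod_cons, hm3, List.prod_cons, List.length_cons]
      group

lemma swaps_to_word (t : Equiv.Perm (Fin n)) (m : List (Equiv.Perm (Fin n)))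
    (hm : ∀ x ∈ m, Equiv.Perm.IsSwap x) :
    ∃ l : List (Equiv.Perm (Fin n)), (∀ x ∈ l, ∃ s, Equiv.Perm.IsSwap s ∧ x = t * s) ∧
      l.length = m.length ∧ l.prod = t ^ m.length * m.prod := by
  induction m with
  | nil => exact ⟨[], by simp, by simp, by simp⟩
  | cons s m ih =>
    obtain ⟨l, hl1, hl2, hl3⟩ := ih (fun y hy => hm y (List.mem_cons_of_mem _ hy))
    have hs := hm s List.mem_cons_self
    refine ⟨(t * (t ^ m.length * s * (t ^ m.length)⁻¹)) :: l, ?_, by simp [hl2], ?_⟩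
    · intro y hy
      rcases List.mem_cons.mp hy with rfl | hy
      · exact ⟨t ^ m.length * s * (t ^ m.length)⁻¹, isSwap_conj hs _, rfl⟩
      · exact hl1 y hy
    · rw [List.prod_cons, hl3, List.prod_cons, List.length_cons]
      group

end StmtAux

/-- For `n ≥ 2` and `v ∈ A_n`, the letters `1` and `2` lie in the same cycle of `v`
iff `ℓ(v)` is odd. -/
theorem stmt_8 (n : ℕ) (hn : 2 ≤ n) (v : Equiv.Perm (Fin n))
    (hv : v ∈ alternatingGroup (Fin n)) :
    v.SameCycle ⟨0, by omega⟩ ⟨1, by omega⟩ ↔ Odd (alen n v) := by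
  classical
  open StmtAux in
  have h0 : (0 : ℕ) < n := by omega
  have h1 : (1 : ℕ) < n := by omega
  set a : Fin n := ⟨0, h0⟩ with ha
  set b : Fin n := ⟨1, h1⟩ with hb
  have hab : a ≠ b := by
    simp [ha, hb, Fin.ext_iff]
  set t : Equiv.Perm (Fin n) := Equiv.swap a b with htdef
  have ht2 : t * t = 1 := Equiv.swap_mul_self a b
  -- membership in ATrans
  have hAT : ∀ x : Equiv.Perm (Fin n), x ∈ ATrans n ↔
      ∃ s, Equiv.Perm.IsSwap s ∧ x = t * s := by
    intro x
    constructor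
    · rintro ⟨hh1, i, j, hij, rfl⟩
      exact ⟨Equiv.swap i j, ⟨i, j, ne_of_lt hij, rfl⟩, rfl⟩
    · rintro ⟨s, ⟨i, j, hij, rfl⟩, rfl⟩
      rcases lt_or_gt_of_ne hij with h | h
      · exact ⟨h1, i, j, h, rfl⟩
      · exact ⟨h1, j, i, h, by rw [Equiv.swap_comm]⟩
  -- sign facts
  have hsv : Equiv.Perm.sign v = 1 := Equiv.Perm.mem_alternatingGroup.mp hv
  have hrv_even : Even (StmtAux.rk v) := by
    have hh : ((-1 : ℤˣ)) ^ (0 : ℕ) = (-1) ^ (StmtAux.rk v) := by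
      rw [pow_zero, ← StmtAux.sign_eq_rk]
      exact hsv.symm
    exact (StmtAux.even_iff_of_pow_eq hh).mp Even.zero
  have hrtv_odd : Odd (StmtAux.rk (t * v)) := by
    have hsign : Equiv.Perm.sign (t * v) = -1 := by
      rw [map_mul, hsv, mul_one, htdef, Equiv.Perm.sign_swap hab]
    have hh : ((-1 : ℤˣ)) ^ (1 : ℕ) = (-1) ^ (StmtAux.rk (t * v)) := by
      rw [pow_one, ← StmtAux.sign_eq_rk]
      exact hsign.symm
    have h2 := StmtAux.even_iff_of_pow_eq hh
    rw [← Nat.not_even_iff_odd]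
    intro hc
    exact (by decide : ¬ Even 1) (h2.mpr hc)
  -- description of the length set
  have hSdesc : ∀ k : ℕ,
      (∃ l : List (Equiv.Perm (Fin n)),
        (∀ x ∈ l, x ∈ ATrans n) ∧ l.length = k ∧ l.prod = v)
      ↔ ((Even k ∧ StmtAux.rk v ≤ k) ∨ (¬ Even k ∧ StmtAux.rk (t * v) ≤ k)) := by
    intro k
    have hstep : (∃ l : List (Equiv.Perm (Fin n)),
        (∀ x ∈ l, x ∈ ATrans n) ∧ l.length = k ∧ l.prod = v)
        ↔ (∃ m : List (Equiv.Perm (Fin n)),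
          (∀ x ∈ m, Equiv.Perm.IsSwap x) ∧ m.length = k ∧ t ^ k * m.prod = v) := by
      constructor
      · rintro ⟨l, hl1, rfl, rfl⟩
        obtain ⟨m, hm1, hm2, hm3⟩ := StmtAux.word_to_swaps t l
          (fun x hx => (hAT x).mp (hl1 x hx))
        exact ⟨m, hm1, hm2, hm3.symm⟩
      · rintro ⟨m, hm1, rfl, hm3⟩
        obtain ⟨l, hl1, hl2, hl3⟩ := StmtAux.swaps_to_word t m hm1
        exact ⟨l, fun x hx => (hAT x).mpr (hl1 x hx), hl2, by rw [hl3, hm3]⟩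
    rw [hstep]
    rcases Nat.even_or_odd k with hk | hk
    · have hpow : t ^ k = 1 := by
        obtain ⟨j, hj⟩ := hk
        rw [hj, ← two_mul, pow_mul, pow_two, ht2, one_pow]
      have : (∃ m : List (Equiv.Perm (Fin n)),
          (∀ x ∈ m, Equiv.Perm.IsSwap x) ∧ m.length = k ∧ t ^ k * m.prod = v)
          ↔ (StmtAux.rk v ≤ k ∧ (Even k ↔ Even (StmtAux.rk v))) := by
        rw [← StmtAux.wk_iff hab v k]
        simp only [hpow, one_mul]
      rw [this]
      have hke : Even k := hk
      constructor
      · rintro ⟨hle, -⟩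
        exact Or.inl ⟨hke, hle⟩
      · rintro (⟨-, hle⟩ | ⟨hne, -⟩)
        · exact ⟨hle, iff_of_true hke hrv_even⟩
        · exact absurd hke hne
    · have hko : ¬ Even k := Nat.not_even_iff_odd.mpr hk
      have hpow : t ^ k = t := by
        obtain ⟨j, hj⟩ := hk
        rw [hj, pow_add, pow_one, pow_mul, pow_two, ht2, one_pow, one_mul]
      have hconv : ∀ p : Equiv.Perm (Fin n), (t * p = v) ↔ (p = t * v) := by
        intro p
        constructor
        · intro h; rw [← h, ← mul_assoc, ht2, one_mul]
        · intro h; rw [h, ← mul_assoc, ht2, one_mul]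
      have : (∃ m : List (Equiv.Perm (Fin n)),
          (∀ x ∈ m, Equiv.Perm.IsSwap x) ∧ m.length = k ∧ t ^ k * m.prod = v)
          ↔ (StmtAux.rk (t * v) ≤ k ∧ (Even k ↔ Even (StmtAux.rk (t * v)))) := by
        rw [← StmtAux.wk_iff hab (t * v) k]
        simp only [hpow, hconv]
      rw [this]
      have hrtv_ne : ¬ Even (StmtAux.rk (t * v)) := Nat.not_even_iff_odd.mpr hrtv_odd
      constructor
      · rintro ⟨hle, -⟩
        exact Or.inr ⟨hko, hle⟩
      · rintro (⟨hke, -⟩ | ⟨-, hle⟩)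
        · exact absurd hke hko
        · exact ⟨hle, iff_of_false hko hrtv_ne⟩
  -- compute alen
  have hne : StmtAux.rk v ≠ StmtAux.rk (t * v) := by
    intro h
    rw [h] at hrv_even
    exact (Nat.not_even_iff_odd.mpr hrtv_odd) hrv_even
  have halen : alen n v = min (StmtAux.rk v) (StmtAux.rk (t * v)) := by
    have hmem : min (StmtAux.rk v) (StmtAux.rk (t * v)) ∈
        {k | ∃ l : List (Equiv.Perm (Fin n)),
          (∀ x ∈ l, x ∈ ATrans n) ∧ l.length = k ∧ l.prod = v} := by
      rcases le_or_gt (StmtAux.rk v) (StmtAux.rk (t * v)) with hle | hlt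
      · rw [min_eq_left hle]
        exact (hSdesc _).mpr (Or.inl ⟨hrv_even, le_rfl⟩)
      · rw [min_eq_right (le_of_lt hlt)]
        exact (hSdesc _).mpr (Or.inr ⟨Nat.not_even_iff_odd.mpr hrtv_odd, le_rfl⟩)
    have hlb : ∀ k ∈ {k | ∃ l : List (Equiv.Perm (Fin n)),
        (∀ x ∈ l, x ∈ ATrans n) ∧ l.length = k ∧ l.prod = v},
        min (StmtAux.rk v) (StmtAux.rk (t * v)) ≤ k := by
      intro k hk
      rcases (hSdesc k).mp hk with ⟨-, h⟩ | ⟨-, h⟩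
      · exact le_trans (min_le_left _ _) h
      · exact le_trans (min_le_right _ _) h
    refine le_antisymm (Nat.sInf_le hmem) ?_
    exact hlb _ (Nat.sInf_mem ⟨_, hmem⟩)
  show v.SameCycle a b ↔ Odd (alen n v)
  constructor
  · intro hsc
    have hlt : StmtAux.rk (t * v) < StmtAux.rk v := StmtAux.rk_swap_mul_lt hab hsc
    rw [halen, min_eq_right (le_of_lt hlt)]
    exact hrtv_odd
  · intro hodd
    by_contra hsc
    have hlt : StmtAux.rk v < StmtAux.rk (t * v) := StmtAux.rk_lt_rk_swap_mul hab hsc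
    rw [halen, min_eq_left (le_of_lt hlt)] at hodd
    exact (Nat.not_even_iff_odd.mpr hodd) hrv_even
end

section
/- For every n ≥ 3 and every v ∈ A_n: if ℓ(v) is even then cyc(v) = n - ℓ(v), and if ℓ(v) is odd then cyc(v) = n - ℓ(v) - 1. -/
/-- `cyc(v)`: the number of cycles of `v` including fixed points, i.e. the number of
orbits of the cyclic group generated by `v` acting on `Fin n`. -/
noncomputable def cycNum (n : ℕ) (v : Equiv.Perm (Fin n)) : ℕ :=
  Nat.card (MulAction.orbitRel.Quotient (Subgroup.zpowers v) (Fin n))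

namespace StmtNine

open Equiv Equiv.Perm

variable {n : ℕ}

/-- The orbit quotient. -/
abbrev QT (u : Equiv.Perm (Fin n)) : Type :=
  MulAction.orbitRel.Quotient (Subgroup.zpowers u) (Fin n)

lemma mk_eq_mk_iff {u : Equiv.Perm (Fin n)} {x y : Fin n} :
    (Quotient.mk'' x : QT u) = Quotient.mk'' y ↔ u.SameCycle x y := by
  rw [Quotient.eq'']
  change MulAction.orbitRel _ _ x y ↔ _
  rw [MulAction.orbitRel_apply, MulAction.mem_orbit_iff]
  constructor
  · rintro ⟨⟨g, hg⟩, h⟩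
    obtain ⟨i, rfl⟩ := Subgroup.mem_zpowers_iff.mp hg
    refine Equiv.Perm.SameCycle.symm ⟨i, ?_⟩
    simpa [Equiv.Perm.smul_def] using h
  · rintro ⟨i, hi⟩
    refine ⟨⟨u ^ (-i), Subgroup.zpow_mem _ (Subgroup.mem_zpowers u) _⟩, ?_⟩
    show (u ^ (-i)) y = x
    rw [← hi, ← Equiv.Perm.mul_apply, ← zpow_add]
    simp

lemma card_QT_one : Nat.card (QT (1 : Equiv.Perm (Fin n))) = n := by
  have e : QT (1 : Equiv.Perm (Fin n)) ≃ Fin n :=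
    { toFun := fun q => q.liftOn' id (fun a b hab => by
        have : (Quotient.mk'' a : QT (1 : Equiv.Perm (Fin n))) = Quotient.mk'' b :=
          Quotient.sound' hab
        simpa using Equiv.Perm.sameCycle_one.mp (mk_eq_mk_iff.mp this))
      invFun := Quotient.mk''
      left_inv := fun q => by
        induction q using Quotient.inductionOn' with
        | h a => rfl
      right_inv := fun x => rfl }
  rw [Nat.card_congr e]
  simp

lemma sc_apply_self (u : Equiv.Perm (Fin n)) (z : Fin n) : u.SameCycle z (u z) :=
  ⟨1, by simp⟩

lemma sc_pow_right (u : Equiv.Perm (Fin n)) (x : Fin n) (k : ℕ) :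
    u.SameCycle x ((u ^ k) x) := ⟨k, by simp⟩

/-- Key pointwise lemma: if `a` and `b` are in different `u`-cycles, then in
`swap a b * u` the point `a` is reachable from `b`. -/
lemma lemH1 {u : Equiv.Perm (Fin n)} {a b : Fin n} (hab : ¬ u.SameCycle a b) :
    (Equiv.swap a b * u).SameCycle b a := by
  set w := Equiv.swap a b * u with hw
  have hw_apply : ∀ z, w z = Equiv.swap a b (u z) := fun z => rfl
  have C : ∀ k : ℕ, ∀ z : Fin n, ¬ u.SameCycle a z → (u ^ (k + 1)) z = b →
      w.SameCycle z a := by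
    intro k
    induction k with
    | zero =>
      intro z hz h1
      have h1' : u z = b := by simpa using h1
      have : w z = a := by rw [hw_apply, h1', Equiv.swap_apply_right]
      exact ⟨1, by simpa using this⟩
    | succ k ih =>
      intro z hz h1
      rcases eq_or_ne (u z) b with h2 | h2
      · have : w z = a := by rw [hw_apply, h2, Equiv.swap_apply_right]
        exact ⟨1, by simpa using this⟩
      · have h3 : u z ≠ a := by
          intro hza
          exact hz ⟨-1, by rw [← hza]; simp⟩
        have hwz : w z = u z := by rw [hw_apply, Equiv.swap_apply_of_ne_of_ne h3 h2]
        have hz' : ¬ u.SameCycle a (u z) := fun hc => hz (Equiv.Perm.sameCycle_apply_right.mp hc)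
        have h1' : (u ^ (k + 1)) (u z) = b := by
          rw [← Equiv.Perm.mul_apply, ← pow_succ]
          exact h1
        have hrec := ih (u z) hz' h1'
        have hone : w.SameCycle z (u z) := ⟨1, by simpa using hwz⟩
        exact hone.trans hrec
  obtain ⟨m, hm⟩ : ∃ m, orderOf u = m + 1 :=
    ⟨orderOf u - 1, (Nat.succ_pred_eq_of_pos (orderOf_pos u)).symm⟩
  refine C m b hab ?_
  rw [← hm, pow_orderOf_eq_one]
  rfl

/-- If the `u`-cycle of `x` avoids `b`, then `u`-reachability from `x` implies
`swap a b * u`-reachability. -/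
lemma lemW {u : Equiv.Perm (Fin n)} {a b x y : Fin n} (hx : ¬ u.SameCycle b x)
    (h : u.SameCycle x y) : (Equiv.swap a b * u).SameCycle x y := by
  set w := Equiv.swap a b * u with hw
  have hw_apply : ∀ z, w z = Equiv.swap a b (u z) := fun z => rfl
  have step : ∀ z, ¬ u.SameCycle b z → w.SameCycle z (u z) := by
    intro z hz
    rcases eq_or_ne (u z) b with h2 | h2
    · exact absurd ⟨-1, by rw [← h2]; simp⟩ hz
    · rcases eq_or_ne (u z) a with h1 | h1
      · have hza : w z = b := by rw [hw_apply, h1, Equiv.swap_apply_left]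
        have h3 : ¬ u.SameCycle a b := by
          intro hc
          exact hz (hc.symm.trans ⟨-1, by rw [← h1]; simp⟩)
        have h4 : w.SameCycle b a := lemH1 h3
        have h5 : w.SameCycle z b := ⟨1, by simpa using hza⟩
        rw [h1]
        exact h5.trans h4
      · have : w z = u z := by rw [hw_apply, Equiv.swap_apply_of_ne_of_ne h1 h2]
        exact ⟨1, by simpa using this⟩
  obtain ⟨k, -, hk⟩ := h.exists_pow_eq'
  have main : ∀ k : ℕ, w.SameCycle x ((u ^ k) x) := by
    intro k
    induction k with
    | zero => simpa using Equiv.Perm.SameCycle.refl w x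
    | succ k ih =>
      have h5 : ¬ u.SameCycle b ((u ^ k) x) := fun hc =>
        hx (hc.trans (sc_pow_right u x k).symm)
      have := step _ h5
      rw [pow_succ'] at *
      rw [Equiv.Perm.mul_apply]
      exact ih.trans (by simpa using this)
  exact hk ▸ main k

/-- If the `u`-cycles of `x` and `y` avoid `b`, then `swap a b * u`-reachability
implies `u`-reachability. -/
lemma lemI {u : Equiv.Perm (Fin n)} {a b x y : Fin n}
    (hx : ¬ u.SameCycle b x) (hy : ¬ u.SameCycle b y)
    (h : (Equiv.swap a b * u).SameCycle x y) : u.SameCycle x y := by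
  set w := Equiv.swap a b * u with hw
  have hw_apply : ∀ z, w z = Equiv.swap a b (u z) := fun z => rfl
  obtain ⟨k, -, hk⟩ := h.exists_pow_eq'
  by_cases ha : u.SameCycle a x
  · have hS : ∀ m : ℕ, u.SameCycle x ((w ^ m) x) ∨ u.SameCycle b ((w ^ m) x) := by
      intro m
      induction m with
      | zero => exact Or.inl (by simpa using Equiv.Perm.SameCycle.refl u x)
      | succ m ih =>
        set z := (w ^ m) x with hz
        rw [pow_succ', Equiv.Perm.mul_apply, ← hz]
        rcases eq_or_ne (u z) a with h1 | h1
        · right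
          have : w z = b := by rw [hw_apply, h1, Equiv.swap_apply_left]
          rw [this]
        · rcases eq_or_ne (u z) b with h2 | h2
          · left
            have : w z = a := by rw [hw_apply, h2, Equiv.swap_apply_right]
            rw [this]
            exact ha.symm
          · have hwz : w z = u z := by rw [hw_apply, Equiv.swap_apply_of_ne_of_ne h1 h2]
            rw [hwz]
            rcases ih with h3 | h3
            · exact Or.inl (h3.trans (sc_apply_self u z))
            · exact Or.inr (h3.trans (sc_apply_self u z))
    have := hS k
    rw [hk] at this
    rcases this with h3 | h3
    · exact h3
    · exact absurd h3 hy
  · have hS : ∀ m : ℕ, u.SameCycle x ((w ^ m) x) := by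
      intro m
      induction m with
      | zero => simpa using Equiv.Perm.SameCycle.refl u x
      | succ m ih =>
        set z := (w ^ m) x with hz
        rw [pow_succ', Equiv.Perm.mul_apply, ← hz]
        have h1 : u z ≠ a := by
          intro hc
          have haz : u.SameCycle a z := ⟨-1, by rw [← hc]; simp⟩
          exact ha (haz.trans ih.symm)
        have h2 : u z ≠ b := by
          intro hc
          have hbz : u.SameCycle b z := ⟨-1, by rw [← hc]; simp⟩
          exact hx (hbz.trans ih.symm)
        have hwz : w z = u z := by rw [hw_apply, Equiv.swap_apply_of_ne_of_ne h1 h2]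
        rw [hwz]
        exact ih.trans (sc_apply_self u z)
    have := hS k
    rw [hk] at this
    exact this

/-- Multiplying by a swap decreases the number of cycles by at most one. -/
lemma lemL (u : Equiv.Perm (Fin n)) (a b : Fin n) :
    Nat.card (QT u) ≤ Nat.card (QT (Equiv.swap a b * u)) + 1 := by
  classical
  set w := Equiv.swap a b * u with hw
  have hwd : ∀ x y : Fin n, MulAction.orbitRel (Subgroup.zpowers u) (Fin n) x y →
      (if u.SameCycle b x then (none : Option (QT w)) else some (Quotient.mk'' x)) =
      (if u.SameCycle b y then none else some (Quotient.mk'' y)) := by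
    intro x y hxy
    have hsc : u.SameCycle x y := mk_eq_mk_iff.mp (Quotient.sound' hxy)
    by_cases hbx : u.SameCycle b x
    · rw [if_pos hbx, if_pos (hbx.trans hsc)]
    · have hby : ¬ u.SameCycle b y := fun hc => hbx (hc.trans hsc.symm)
      rw [if_neg hbx, if_neg hby]
      exact congrArg some (mk_eq_mk_iff.mpr (lemW hbx hsc))
  let f : QT u → Option (QT w) := fun q => q.liftOn'
    (fun x => if u.SameCycle b x then none else some (Quotient.mk'' x)) hwd
  have hinj : Function.Injective f := by
    intro q1 q2
    induction q1 using Quotient.inductionOn' with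
    | h x =>
    induction q2 using Quotient.inductionOn' with
    | h y =>
    intro hf
    have hf' : (if u.SameCycle b x then (none : Option (QT w)) else some (Quotient.mk'' x)) =
        (if u.SameCycle b y then none else some (Quotient.mk'' y)) := hf
    by_cases hbx : u.SameCycle b x <;> by_cases hby : u.SameCycle b y
    · exact mk_eq_mk_iff.mpr (hbx.symm.trans hby)
    · rw [if_pos hbx, if_neg hby] at hf'; exact absurd hf' (by simp)
    · rw [if_neg hbx, if_pos hby] at hf'; exact absurd hf' (by simp)
    · rw [if_neg hbx, if_neg hby] at hf'
      have := mk_eq_mk_iff.mp (Option.some_injective _ hf')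
      exact mk_eq_mk_iff.mpr (lemI hbx hby this)
  calc Nat.card (QT u) ≤ Nat.card (Option (QT w)) := Nat.card_le_card_of_injective f hinj
    _ = Nat.card (QT w) + 1 := Finite.card_option

/-- Multiplying by `swap x (v x)` (with `v x ≠ x`) increases the number of cycles. -/
lemma lemS {v : Equiv.Perm (Fin n)} {x : Fin n} (hx : v x ≠ x) :
    Nat.card (QT v) + 1 ≤ Nat.card (QT (Equiv.swap x (v x) * v)) := by
  classical
  set b := v x with hb
  set w := Equiv.swap x b * v with hw
  have hw_comm : w = Equiv.swap b x * v := by rw [hw, Equiv.swap_comm]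
  have hwx : w x = x := by
    show Equiv.swap x b (v x) = x
    rw [← hb, Equiv.swap_apply_right]
  have hfix : ∀ z, w.SameCycle x z → z = x := by
    rintro z ⟨i, hi⟩
    rw [Equiv.Perm.zpow_apply_eq_self_of_apply_eq_self hwx] at hi
    exact hi.symm
  have hwd : ∀ z y : Fin n, MulAction.orbitRel (Subgroup.zpowers v) (Fin n) z y →
      (if v.SameCycle x z then (Quotient.mk'' b : QT w) else Quotient.mk'' z) =
      (if v.SameCycle x y then Quotient.mk'' b else Quotient.mk'' y) := by
    intro z y hzy
    have hsc : v.SameCycle z y := mk_eq_mk_iff.mp (Quotient.sound' hzy)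
    by_cases hxz : v.SameCycle x z
    · rw [if_pos hxz, if_pos (hxz.trans hsc)]
    · have hxy : ¬ v.SameCycle x y := fun hc => hxz (hc.trans hsc.symm)
      rw [if_neg hxz, if_neg hxy]
      exact mk_eq_mk_iff.mpr (hw_comm ▸ lemW hxz hsc)
  let g : QT v → QT w := fun q => q.liftOn'
    (fun z => if v.SameCycle x z then Quotient.mk'' b else Quotient.mk'' z) hwd
  -- the class of `b` in `w` never contains a point outside the `v`-class of `x`
  have hclosed : ∀ y : Fin n, ¬ v.SameCycle x y → ¬ w.SameCycle b y := by
    intro y hxy hby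
    have hcl : ∀ k : ℕ, v.SameCycle y ((w ^ k) y) := by
      intro k
      induction k with
      | zero => simpa using Equiv.Perm.SameCycle.refl v y
      | succ k ih =>
        set z := (w ^ k) y with hz
        rw [pow_succ', Equiv.Perm.mul_apply, ← hz]
        have h1 : v z ≠ x := by
          intro hc
          have hxz : v.SameCycle x z := ⟨-1, by rw [← hc]; simp⟩
          exact hxy (hxz.trans ih.symm)
        have h2 : v z ≠ b := by
          intro hc
          have : v.SameCycle y b := ih.trans ⟨1, by simpa using hc⟩
          rw [hb] at this
          exact hxy (Equiv.Perm.sameCycle_apply_right.mp this).symm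
        have hwz : w z = v z := by
          show Equiv.swap x b (v z) = v z
          rw [Equiv.swap_apply_of_ne_of_ne h1 h2]
        rw [hwz]
        exact ih.trans (sc_apply_self v z)
    obtain ⟨k, -, hk⟩ := hby.symm.exists_pow_eq'
    have : v.SameCycle y b := hk ▸ hcl k
    rw [hb] at this
    exact hxy (Equiv.Perm.sameCycle_apply_right.mp this).symm
  have hbx : ¬ w.SameCycle x b := fun hc => hx (hb ▸ hfix b hc)
  let F : Option (QT v) → QT w := fun o => o.elim (Quotient.mk'' x) g
  have hinj : Function.Injective F := by
    intro o1 o2 ho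
    match o1, o2 with
    | none, none => rfl
    | none, some q =>
      exfalso
      induction q using Quotient.inductionOn' with
      | h z =>
      have hgz : (Quotient.mk'' x : QT w) =
          (if v.SameCycle x z then Quotient.mk'' b else Quotient.mk'' z) := ho
      by_cases hxz : v.SameCycle x z
      · rw [if_pos hxz] at hgz
        exact hbx (mk_eq_mk_iff.mp hgz)
      · rw [if_neg hxz] at hgz
        exact hxz (hfix z (mk_eq_mk_iff.mp hgz) ▸ Equiv.Perm.SameCycle.refl v x)
    | some q, none =>
      exfalso
      induction q using Quotient.inductionOn' with
      | h z =>
      have hgz : (if v.SameCycle x z then (Quotient.mk'' b : QT w) else Quotient.mk'' z) =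
          Quotient.mk'' x := ho
      by_cases hxz : v.SameCycle x z
      · rw [if_pos hxz] at hgz
        exact hbx (mk_eq_mk_iff.mp hgz.symm)
      · rw [if_neg hxz] at hgz
        exact hxz (hfix z (mk_eq_mk_iff.mp hgz.symm) ▸ Equiv.Perm.SameCycle.refl v x)
    | some q1, some q2 =>
      congr 1
      induction q1 using Quotient.inductionOn' with
      | h z =>
      induction q2 using Quotient.inductionOn' with
      | h y =>
      have hgz : (if v.SameCycle x z then (Quotient.mk'' b : QT w) else Quotient.mk'' z) =
          (if v.SameCycle x y then Quotient.mk'' b else Quotient.mk'' y) := ho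
      by_cases hxz : v.SameCycle x z <;> by_cases hxy : v.SameCycle x y
      · exact mk_eq_mk_iff.mpr (hxz.symm.trans hxy)
      · rw [if_pos hxz, if_neg hxy] at hgz
        exact absurd (mk_eq_mk_iff.mp hgz) (hclosed y hxy)
      · rw [if_neg hxz, if_pos hxy] at hgz
        exact absurd (mk_eq_mk_iff.mp hgz.symm) (hclosed z hxz)
      · rw [if_neg hxz, if_neg hxy] at hgz
        have := mk_eq_mk_iff.mp hgz
        exact mk_eq_mk_iff.mpr (lemI (b := x) (a := b) hxz hxy (hw_comm ▸ this))
  calc Nat.card (QT v) + 1 = Nat.card (Option (QT v)) := Finite.card_option.symm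
    _ ≤ Nat.card (QT w) := Nat.card_le_card_of_injective F hinj

lemma lemE {v : Equiv.Perm (Fin n)} {x : Fin n} (hx : v x ≠ x) :
    Nat.card (QT (Equiv.swap x (v x) * v)) = Nat.card (QT v) + 1 := by
  refine le_antisymm ?_ (lemS hx)
  have := lemL (Equiv.swap x (v x) * v) x (v x)
  rwa [← mul_assoc, Equiv.swap_mul_self, one_mul] at this

/-- Every permutation is a product of `n - cyc(v)` transpositions. -/
lemma achieve (v : Equiv.Perm (Fin n)) :
    ∃ l : List (Equiv.Perm (Fin n)), (∀ g ∈ l, g.IsSwap) ∧ l.prod = v ∧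
      Nat.card (QT v) + l.length = n := by
  classical
  suffices H : ∀ c (v : Equiv.Perm (Fin n)), v.support.card = c →
      ∃ l : List (Equiv.Perm (Fin n)), (∀ g ∈ l, g.IsSwap) ∧ l.prod = v ∧
        Nat.card (QT v) + l.length = n from H _ v rfl
  intro c
  induction c using Nat.strong_induction_on with
  | _ c ih =>
  intro v hc
  by_cases hv : v = 1
  · subst hv
    exact ⟨[], by simp, by simp, by simpa using card_QT_one⟩
  · obtain ⟨x, hx⟩ : ∃ x, v x ≠ x := by
      by_contra hc'
      push_neg at hc'
      exact hv (Equiv.ext fun y => by simpa using hc' y)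
    set w := Equiv.swap x (v x) * v with hwdef
    have hlt : w.support.card < v.support.card := Equiv.Perm.card_support_swap_mul hx
    obtain ⟨l, hl1, hl2, hl3⟩ := ih w.support.card (hc ▸ hlt) w rfl
    refine ⟨Equiv.swap x (v x) :: l, ?_, ?_, ?_⟩
    · intro g hg
      rcases List.mem_cons.mp hg with h | h
      · exact h ▸ ⟨x, v x, Ne.symm hx, rfl⟩
      · exact hl1 g h
    · rw [List.prod_cons, hl2, hwdef, ← mul_assoc, Equiv.swap_mul_self, one_mul]
    · have := lemE hx
      rw [← hwdef] at this
      simp only [List.length_cons]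
      omega

/-- Lower bound: if `v` is a product of `k` transpositions then `n ≤ cyc(v) + k`. -/
lemma lowerBound (l : List (Equiv.Perm (Fin n))) (hl : ∀ g ∈ l, g.IsSwap) :
    n ≤ Nat.card (QT l.prod) + l.length := by
  induction l with
  | nil => simpa using card_QT_one.ge
  | cons t l ih =>
    obtain ⟨a, b, hab, rfl⟩ := hl t List.mem_cons_self
    have h1 := ih (fun g hg => hl g (List.mem_cons_of_mem _ hg))
    have h2 := lemL l.prod a b
    rw [List.prod_cons]
    simp only [List.length_cons]
    omega

/-- The distinguished transposition `(1 2)`. -/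
def sperm (n : ℕ) (h1 : 1 < n) : Equiv.Perm (Fin n) :=
  Equiv.swap (⟨0, by omega⟩ : Fin n) ⟨1, h1⟩

lemma sperm_isSwap (h1 : 1 < n) : (sperm n h1).IsSwap :=
  ⟨_, _, by simp [Fin.ext_iff], rfl⟩

lemma sperm_sq (h1 : 1 < n) : sperm n h1 * sperm n h1 = 1 :=
  Equiv.swap_mul_self _ _

lemma sperm_pow_even (h1 : 1 < n) {k : ℕ} (hk : Even k) : sperm n h1 ^ k = 1 := by
  obtain ⟨m, rfl⟩ := hk
  rw [← two_mul, pow_mul, pow_two, sperm_sq, one_pow]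

lemma sperm_pow_odd (h1 : 1 < n) {k : ℕ} (hk : Odd k) : sperm n h1 ^ k = sperm n h1 := by
  obtain ⟨m, rfl⟩ := hk
  rw [pow_succ, sperm_pow_even h1 (even_two_mul m), one_mul]

lemma mem_ATrans (h1 : 1 < n) {t : Equiv.Perm (Fin n)} (ht : t.IsSwap) :
    sperm n h1 * t ∈ ATrans n := by
  obtain ⟨c, d, hcd, rfl⟩ := ht
  rcases lt_or_gt_of_ne hcd with h | h
  · exact ⟨h1, c, d, h, rfl⟩
  · exact ⟨h1, d, c, h, by rw [Equiv.swap_comm c d]; rfl⟩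

lemma ATrans_char (h1 : 1 < n) {g : Equiv.Perm (Fin n)} (hg : g ∈ ATrans n) :
    ∃ t : Equiv.Perm (Fin n), t.IsSwap ∧ g = sperm n h1 * t := by
  obtain ⟨h1', i, j, hij, rfl⟩ := hg
  exact ⟨Equiv.swap i j, ⟨i, j, hij.ne, rfl⟩, rfl⟩

lemma isSwap_conj {t : Equiv.Perm (Fin n)} (σ : Equiv.Perm (Fin n)) (ht : t.IsSwap) :
    (σ * t * σ⁻¹).IsSwap := by
  obtain ⟨c, d, hcd, rfl⟩ := ht
  exact ⟨σ c, σ d, fun h => hcd (σ.injective h), (Equiv.swap_apply_apply σ c d).symm⟩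

/-- Pairing: an even-length list of transpositions can be converted into a list of
A-transpositions of the same length and product. -/
lemma pair (h1 : 1 < n) (l : List (Equiv.Perm (Fin n))) (hswap : ∀ g ∈ l, g.IsSwap)
    (heven : Even l.length) :
    ∃ l' : List (Equiv.Perm (Fin n)), (∀ g ∈ l', g ∈ ATrans n) ∧
      l'.length = l.length ∧ l'.prod = l.prod := by
  classical
  suffices H : ∀ k (l : List (Equiv.Perm (Fin n))), l.length = k →
      (∀ g ∈ l, g.IsSwap) → Even l.length →
      ∃ l' : List (Equiv.Perm (Fin n)), (∀ g ∈ l', g ∈ ATrans n) ∧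
        l'.length = l.length ∧ l'.prod = l.prod from H _ l rfl hswap heven
  intro k
  induction k using Nat.strong_induction_on with
  | _ k ih =>
  intro l hlen hsw he
  match l with
  | [] => exact ⟨[], by simp, rfl, rfl⟩
  | [t] => simp at he
  | t1 :: t2 :: rest =>
    have hrest : Even rest.length := by
      rw [Nat.even_iff] at he ⊢
      simp only [List.length_cons] at he
      omega
    obtain ⟨l', hl'1, hl'2, hl'3⟩ := ih rest.length
      (by simp only [List.length_cons] at hlen; omega) rest rfl
      (fun g hg => hsw g (by simp [hg])) hrest
    set s := sperm n h1 with hs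
    refine ⟨(s * (s * t1 * s)) :: (s * t2) :: l', ?_, ?_, ?_⟩
    · intro g hg
      rcases List.mem_cons.mp hg with h | h
      · subst h
        refine mem_ATrans h1 ?_
        have : s * t1 * s = s * t1 * s⁻¹ := by
          rw [show s⁻¹ = s from ?_]
          rw [hs, sperm]
          exact Equiv.swap_inv _ _
        rw [this]
        exact isSwap_conj s (hsw t1 (by simp))
      rcases List.mem_cons.mp h with h' | h'
      · subst h'
        exact mem_ATrans h1 (hsw t2 (by simp))
      · exact hl'1 g h'
    · simp [hl'2]
    · simp only [List.prod_cons, hl'3]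
      have hss : s * s = 1 := sperm_sq h1
      calc s * (s * t1 * s) * (s * t2 * (rest.prod))
          = (s * s) * t1 * (s * s) * (t2 * rest.prod) := by
            simp only [mul_assoc]
        _ = t1 * (t2 * rest.prod) := by rw [hss]; simp

/-- Unpairing: a word in A-transpositions of length `k` equals `s^k` times a
product of `k` transpositions. -/
lemma unpair (h1 : 1 < n) (l : List (Equiv.Perm (Fin n))) (hl : ∀ g ∈ l, g ∈ ATrans n) :
    ∃ m : List (Equiv.Perm (Fin n)), (∀ t ∈ m, t.IsSwap) ∧ m.length = l.length ∧
      l.prod = sperm n h1 ^ l.length * m.prod := by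
  induction l with
  | nil => exact ⟨[], by simp, rfl, by simp⟩
  | cons g l ih =>
    obtain ⟨m, hm1, hm2, hm3⟩ := ih (fun g' hg' => hl g' (List.mem_cons_of_mem _ hg'))
    obtain ⟨t, ht, hgt⟩ := ATrans_char h1 (hl g List.mem_cons_self)
    set s := sperm n h1 with hs
    refine ⟨((s ^ l.length)⁻¹ * t * ((s ^ l.length)⁻¹)⁻¹) :: m, ?_, by simp [hm2], ?_⟩
    · intro t' ht'
      rcases List.mem_cons.mp ht' with h | h
      · subst h
        exact isSwap_conj _ ht
      · exact hm1 t' h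
    · rw [List.prod_cons, List.prod_cons, hm3, hgt]
      simp only [List.length_cons, inv_inv]
      group

end StmtNine

/-- For `n ≥ 3` and `v ∈ A_n`: if `ℓ(v)` is even then `cyc(v) = n - ℓ(v)`, and if
`ℓ(v)` is odd then `cyc(v) = n - ℓ(v) - 1`. -/
theorem stmt_9 (n : ℕ) (hn : 3 ≤ n) (v : Equiv.Perm (Fin n))
    (hv : v ∈ alternatingGroup (Fin n)) :
    (Even (alen n v) → cycNum n v = n - alen n v) ∧
    (Odd (alen n v) → cycNum n v = n - alen n v - 1) := by
  classical
  have h1 : 1 < n := by omega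
  obtain ⟨l0, hl0s, hl0p, hl0c⟩ := StmtNine.achieve v
  have hcyc : cycNum n v = Nat.card (StmtNine.QT v) := rfl
  have hsign : Equiv.Perm.sign v = 1 := Equiv.Perm.mem_alternatingGroup.mp hv
  have heven : Even l0.length := by
    have hh := Equiv.Perm.sign_prod_list_swap hl0s
    rw [hl0p, hsign] at hh
    exact (neg_one_pow_eq_one_iff_even (by decide)).mp hh.symm
  obtain ⟨l1, hl1m, hl1len, hl1p⟩ := StmtNine.pair h1 l0 hl0s heven
  have hmemS : l0.length ∈ {k | ∃ l : List (Equiv.Perm (Fin n)),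
      (∀ x ∈ l, x ∈ ATrans n) ∧ l.length = k ∧ l.prod = v} :=
    ⟨l1, hl1m, hl1len, by rw [hl1p, hl0p]⟩
  have hub : alen n v ≤ l0.length := Nat.sInf_le hmemS
  obtain ⟨L, hLm, hLlen, hLp⟩ := Nat.sInf_mem (⟨l0.length, hmemS⟩ :
    {k | ∃ l : List (Equiv.Perm (Fin n)),
      (∀ x ∈ l, x ∈ ATrans n) ∧ l.length = k ∧ l.prod = v}.Nonempty)
  obtain ⟨m, hm1, hm2, hm3⟩ := StmtNine.unpair h1 L hLm
  rw [hLp] at hm3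
  rw [Nat.even_iff] at heven
  rcases Nat.even_or_odd (alen n v) with he | ho
  · -- alen even
    have hsp : StmtNine.sperm n h1 ^ L.length = 1 :=
      StmtNine.sperm_pow_even h1 (hLlen ▸ he)
    have hveq : v = m.prod := by rw [hm3, hsp, one_mul]
    have hlb := StmtNine.lowerBound m hm1
    rw [← hveq] at hlb
    have hml : m.length = alen n v := hm2.trans hLlen
    rw [Nat.even_iff] at he
    constructor
    · intro _
      rw [hcyc]
      omega
    · intro hodd
      rw [Nat.odd_iff] at hodd
      omega
  · -- alen odd
    have hsp : StmtNine.sperm n h1 ^ L.length = StmtNine.sperm n h1 :=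
      StmtNine.sperm_pow_odd h1 (hLlen ▸ ho)
    have hveq : v = (StmtNine.sperm n h1 :: m).prod := by
      rw [List.prod_cons, hm3, hsp]
    have hlb := StmtNine.lowerBound (StmtNine.sperm n h1 :: m)
      (by
        intro g hg
        rcases List.mem_cons.mp hg with h | h
        · exact h ▸ StmtNine.sperm_isSwap h1
        · exact hm1 g h)
    rw [← hveq] at hlb
    simp only [List.length_cons] at hlb
    have hml : m.length = alen n v := hm2.trans hLlen
    rw [Nat.odd_iff] at ho
    constructor
    · intro hev
      rw [Nat.even_iff] at hev
      omega
    · intro _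
      rw [hcyc]
      omega
end

section
/- For every n ≥ 3 and every v ∈ A_n: if 1 and 2 lie in different cycles of v then ℓ(v) = n - cyc(v), and if 1 and 2 lie in the same cycle of v then ℓ(v) = n - cyc(v) - 1. -/
set_option linter.unusedSectionVars false
set_option linter.unusedVariables false

namespace AProof
open Equiv Equiv.Perm MulAction Subgroup
variable {α : Type*} [Fintype α] [DecidableEq α]

set_option linter.unusedSectionVars false

noncomputable def cyc (v : Perm α) : ℕ :=
  Nat.card (MulAction.orbitRel.Quotient (Subgroup.zpowers v) α)

lemma orbitRel_iff (v : Perm α) (x y : α) :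
    orbitRel (zpowers v) α x y ↔ v.SameCycle y x := by
  rw [orbitRel_apply, MulAction.mem_orbit_iff]
  constructor
  · rintro ⟨⟨g, i, rfl⟩, hg⟩
    exact ⟨i, hg⟩
  · rintro ⟨i, hi⟩
    exact ⟨⟨v ^ i, i, rfl⟩, hi⟩

lemma quot_eq_iff (v : Perm α) (x y : α) :
    (Quotient.mk (orbitRel (zpowers v) α) x = Quotient.mk _ y) ↔ v.SameCycle x y := by
  rw [Quotient.eq]
  exact (orbitRel_iff v x y).trans Equiv.Perm.sameCycle_comm

lemma cyc_le_card (v : Perm α) : cyc v ≤ Fintype.card α := by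
  rw [cyc, ← Nat.card_eq_fintype_card]
  exact Nat.card_le_card_of_surjective (Quotient.mk _) Quotient.mk''_surjective

lemma cyc_pos (v : Perm α) [Nonempty α] : 0 < cyc v := by
  have : Nonempty (orbitRel.Quotient (zpowers v) α) := ⟨Quotient.mk _ (Classical.arbitrary α)⟩
  exact Nat.card_pos

lemma cyc_one : cyc (1 : Perm α) = Fintype.card α := by
  rw [cyc, ← Nat.card_eq_fintype_card]
  refine Nat.card_congr (Equiv.symm (Equiv.ofBijective (Quotient.mk _) ⟨?_, Quotient.mk''_surjective⟩))
  intro x y h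
  obtain ⟨i, hi⟩ := (quot_eq_iff 1 x y).mp h
  simpa using hi

lemma cyc_le_of_sameCycle (v : Perm α) {x y : α} (hxy : x ≠ y) (h : v.SameCycle x y) :
    cyc v ≤ Fintype.card α - 1 := by
  have hsurj : Function.Surjective
      (fun z : {z : α // z ≠ y} => (Quotient.mk (orbitRel (zpowers v) α) z.1)) := by
    rintro ⟨z⟩
    by_cases hz : z = y
    · exact ⟨⟨x, hxy⟩, (quot_eq_iff v x z).mpr (hz ▸ h)⟩
    · exact ⟨⟨z, hz⟩, rfl⟩
  have := Nat.card_le_card_of_surjective _ hsurj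
  rwa [Nat.card_eq_fintype_card (α := {z : α // z ≠ y}), Fintype.card_subtype_compl (p := (· = y)) ,
    Fintype.card_subtype_eq] at this


lemma cyc_split (v w : Perm α) (a b : α)
    (h1 : ∀ x y, w.SameCycle x y → v.SameCycle x y)
    (h2 : v.SameCycle a b)
    (h3 : ¬ w.SameCycle a b)
    (h4 : ∀ x y, v.SameCycle x y → ¬ v.SameCycle a x → w.SameCycle x y)
    (h5 : ∀ x, v.SameCycle a x → w.SameCycle a x ∨ w.SameCycle b x) :
    cyc w = cyc v + 1 := by
  classical
  set f : α → (orbitRel.Quotient (zpowers v) α) ⊕ Unit := fun x =>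
    if w.SameCycle b x then Sum.inr () else Sum.inl (Quotient.mk _ x) with hf
  have hresp : ∀ x y : α, orbitRel (zpowers w) α x y → f x = f y := by
    intro x y hxy
    have hw : w.SameCycle x y := ((orbitRel_iff w x y).mp hxy).symm
    by_cases hbx : w.SameCycle b x
    · rw [hf]; simp only
      rw [if_pos hbx, if_pos (hbx.trans hw)]
    · have hby : ¬ w.SameCycle b y := fun h => hbx (h.trans hw.symm)
      rw [hf]; simp only
      rw [if_neg hbx, if_neg hby]
      exact congrArg Sum.inl ((quot_eq_iff v x y).mpr (h1 _ _ hw))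
  set F : orbitRel.Quotient (zpowers w) α → (orbitRel.Quotient (zpowers v) α) ⊕ Unit :=
    Quotient.lift f hresp with hF
  have hFmk : ∀ x : α, F (Quotient.mk _ x) = f x := fun x => rfl
  have hbij : Function.Bijective F := by
    constructor
    · rintro ⟨x⟩ ⟨y⟩ hEq
      have hEq' : f x = f y := hEq
      have key : w.SameCycle x y := by
        rw [hf] at hEq'; simp only at hEq'
        by_cases hbx : w.SameCycle b x
        · by_cases hby : w.SameCycle b y
          · exact hbx.symm.trans hby
          · rw [if_pos hbx, if_neg hby] at hEq'; exact absurd hEq' (by simp)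
        · by_cases hby : w.SameCycle b y
          · rw [if_neg hbx, if_pos hby] at hEq'; exact absurd hEq' (by simp)
          · rw [if_neg hbx, if_neg hby] at hEq'
            have hv : v.SameCycle x y := (quot_eq_iff v x y).mp (Sum.inl.inj hEq')
            by_cases hax : v.SameCycle a x
            · have wax : w.SameCycle a x := (h5 x hax).resolve_right hbx
              have way : w.SameCycle a y := (h5 y (hax.trans hv)).resolve_right hby
              exact wax.symm.trans way
            · exact h4 x y hv hax
      exact (Quotient.sound ((orbitRel_iff w x y).mpr key.symm) :
        (Quotient.mk (orbitRel (zpowers w) α) x = Quotient.mk _ y))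
    · rintro (q | ⟨⟩)
      · induction q using Quotient.inductionOn with
        | h x =>
          by_cases hbx : w.SameCycle b x
          · have hax : v.SameCycle a x := h2.trans (h1 _ _ hbx)
            refine ⟨Quotient.mk _ a, ?_⟩
            rw [hFmk, hf]; simp only
            rw [if_neg (fun h => h3 h.symm)]
            exact congrArg Sum.inl ((quot_eq_iff v a x).mpr hax)
          · exact ⟨Quotient.mk _ x, by rw [hFmk, hf]; simp only; rw [if_neg hbx]⟩
      · refine ⟨Quotient.mk _ b, ?_⟩
        rw [hFmk, hf]; simp only
        rw [if_pos (SameCycle.refl w b)]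
  have hcard := Nat.card_congr (Equiv.ofBijective F hbij)
  rw [cyc, cyc, hcard, Nat.card_sum]
  simp


variable {α : Type*} [Fintype α] [DecidableEq α]
set_option linter.unusedSectionVars false

lemma sameCycle_of_nat_pow {v : Perm α} {x y : α} {m : ℕ} (h : (v ^ m) x = y) :
    v.SameCycle x y := ⟨(m : ℤ), by rw [zpow_natCast]; exact h⟩

lemma pow_mul_self_apply {v : Perm α} {a : α} (hp : (v ^ p) a = a) (q : ℕ) :
    (v ^ (p * q)) a = a := by
  induction q with
  | zero => simp
  | succ q ih =>
    have : p * (q + 1) = p * q + p := by ring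
    rw [this, pow_add, Perm.mul_apply, hp, ih]

lemma pow_mod_apply {v : Perm α} {a : α} {p : ℕ} (hp : (v ^ p) a = a) (m : ℕ) :
    (v ^ m) a = (v ^ (m % p)) a := by
  conv_lhs => rw [← Nat.mod_add_div m p, pow_add, Perm.mul_apply,
    pow_mul_self_apply hp (m / p)]

lemma sameCycle_pointwise {v w : Perm α} (h : ∀ x, v.SameCycle x (w x)) :
    ∀ x y, w.SameCycle x y → v.SameCycle x y := by
  have hinv : ∀ x, v.SameCycle x (w⁻¹ x) := fun x => by
    have := h (w⁻¹ x)
    rw [show w (w⁻¹ x) = x from w.apply_symm_apply x] at this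
    exact this.symm
  have key : ∀ i : ℤ, ∀ x, v.SameCycle x ((w ^ i) x) := by
    intro i
    induction i using Int.induction_on with
    | zero => simp [Perm.SameCycle.refl]
    | succ i ih =>
      intro x
      have : (w ^ ((i : ℤ) + 1)) x = (w ^ (i : ℤ)) (w x) := by
        rw [zpow_add_one, Perm.mul_apply]
      rw [this]
      exact (h x).trans (ih (w x))
    | pred i ih =>
      intro x
      have : (w ^ (-(i : ℤ) - 1)) x = (w ^ (-(i : ℤ))) (w⁻¹ x) := by
        rw [zpow_sub_one, Perm.mul_apply]
      rw [this]
      exact (hinv x).trans (ih (w⁻¹ x))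
  rintro x y ⟨i, hi⟩
  exact hi ▸ key i x

section Tracing

variable {v : Perm α} {a b : α}

/-- Merging: if `a, b` lie in different cycles of `v` then they lie in the same
cycle of `v * swap a b`. -/
lemma merge_sameCycle (hab : a ≠ b) (hD : ¬ v.SameCycle a b) :
    (v * Equiv.swap a b).SameCycle a b := by
  set w := v * Equiv.swap a b with hw
  -- period of a under v
  have hex : ∃ p, 0 < p ∧ (v ^ p) a = a :=
    ⟨orderOf v, orderOf_pos v, by rw [pow_orderOf_eq_one]; rfl⟩
  set p := Nat.find hex with hpdef
  obtain ⟨hp0, hpa⟩ := Nat.find_spec hex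
  have hpmin : ∀ q, q < p → ¬(0 < q ∧ (v ^ q) a = a) := fun q hq => Nat.find_min hex hq
  have key : ∀ j, 1 ≤ j → j ≤ p → (w ^ j) b = (v ^ j) a := by
    intro j hj1 hjp
    induction j with
    | zero => omega
    | succ j ih =>
      rcases Nat.eq_or_lt_of_le hj1 with h1 | h1
      · -- j + 1 = 1
        have hj0 : j = 0 := by omega
        subst hj0
        rw [pow_one, pow_one, hw, Perm.mul_apply, Equiv.swap_apply_right]
      · have hj1' : 1 ≤ j := by omega
        have hja : (v ^ j) a ≠ a := by
          intro hja
          exact hpmin j (by omega) ⟨by omega, hja⟩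
        have hjb : (v ^ j) a ≠ b := fun hjb => hD (sameCycle_of_nat_pow hjb)
        rw [pow_succ', Perm.mul_apply, ih hj1' (by omega), hw, Perm.mul_apply,
          Equiv.swap_apply_of_ne_of_ne hja hjb, ← Perm.mul_apply, ← pow_succ']
  have : (w ^ p) b = a := by rw [key p hp0 le_rfl, hpa]
  exact (sameCycle_of_nat_pow this).symm

end Tracing
variable {α : Type*} [Fintype α] [DecidableEq α]
set_option linter.unusedSectionVars false

section Split
variable {v : Perm α} {a b : α}

/-- All the structural facts about `w = v * swap a b` when `a ≠ b` lie in the same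
cycle of `v`. -/
lemma split_facts (hab : a ≠ b) (hS : v.SameCycle a b) :
    ¬ (v * Equiv.swap a b).SameCycle a b ∧
    (∀ x, v.SameCycle a x →
      (v * Equiv.swap a b).SameCycle a x ∨ (v * Equiv.swap a b).SameCycle b x) := by
  set w := v * Equiv.swap a b with hw
  have hex : ∃ p, 0 < p ∧ (v ^ p) a = a :=
    ⟨orderOf v, orderOf_pos v, by rw [pow_orderOf_eq_one]; rfl⟩
  set p := Nat.find hex with hpdef
  obtain ⟨hp0, hpa⟩ := Nat.find_spec hex
  rw [← hpdef] at hp0 hpa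
  have hpmin : ∀ q, q < p → ¬(0 < q ∧ (v ^ q) a = a) := fun q hq => Nat.find_min hex hq
  -- k : minimal with v^k a = b
  have hexk : ∃ k, (v ^ k) a = b := by
    obtain ⟨i, -, hi⟩ := hS.exists_pow_eq'
    exact ⟨i, hi⟩
  set k := Nat.find hexk with hkdef
  have hka : (v ^ k) a = b := Nat.find_spec hexk
  have hkmin : ∀ q, q < k → (v ^ q) a ≠ b := fun q hq => Nat.find_min hexk hq
  have hk0 : 0 < k := by
    rcases Nat.eq_zero_or_pos k with h | h
    · exact absurd (by simpa [h] using hka) hab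
    · exact h
  have hkp : k < p := by
    have h1 : (v ^ (k % p)) a = b := by rw [← pow_mod_apply hpa k]; exact hka
    have h2 : k ≤ k % p := by
      by_contra h
      exact hkmin (k % p) (by omega) h1
    have := Nat.mod_le k p
    have := Nat.mod_lt k hp0
    omega
  -- distinctness of v^i a for i < p
  have hinj : ∀ i j, i < j → j < p → (v ^ i) a ≠ (v ^ j) a := by
    intro i j hij hjp heq
    have hq : (v ^ (p - j + i)) a = a := by
      have : (v ^ (p - j)) ((v ^ j) a) = a := by
        rw [← Perm.mul_apply, ← pow_add]
        rw [Nat.sub_add_cancel (le_of_lt hjp), hpa]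
      rw [pow_add, Perm.mul_apply, heq, this]
    exact hpmin (p - j + i) (by omega) ⟨by omega, hq⟩
  -- action of w on the cycle
  have wa : w a = (v ^ (k + 1)) a := by
    rw [hw, Perm.mul_apply, Equiv.swap_apply_left, ← hka, ← Perm.mul_apply, ← pow_succ']
  have wb : w b = v a := by rw [hw, Perm.mul_apply, Equiv.swap_apply_right]
  have wx : ∀ j, j ≠ 0 → j ≠ k → j < p → w ((v ^ j) a) = (v ^ (j + 1)) a := by
    intro j hj0 hjk hjp
    have hja : (v ^ j) a ≠ a := by
      intro h
      exact hpmin j hjp ⟨Nat.pos_of_ne_zero hj0, h⟩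
    have hjb : (v ^ j) a ≠ b := by
      rw [← hka]
      rcases Nat.lt_or_ge j k with h | h
      · exact hinj j k h hkp
      · exact fun heq => (hinj k j (by omega) hjp heq.symm)
    rw [hw, Perm.mul_apply, Equiv.swap_apply_of_ne_of_ne hja hjb, ← Perm.mul_apply, ← pow_succ']
  -- KC1
  have KC1 : ∀ i, 1 ≤ i → i ≤ p - k → (w ^ i) a = (v ^ (k + i)) a := by
    intro i hi1 hip
    induction i with
    | zero => omega
    | succ i ih =>
      rcases Nat.eq_or_lt_of_le hi1 with h1 | h1
      · have : i = 0 := by omega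
        subst this
        simpa using wa
      · have hi1' : 1 ≤ i := by omega
        rw [pow_succ', Perm.mul_apply, ih hi1' (by omega), wx (k + i) (by omega) (by omega)
          (by omega), Nat.add_assoc]
  have wpa : (w ^ (p - k)) a = a := by
    rw [KC1 (p - k) (by omega) le_rfl]
    have : k + (p - k) = p := by omega
    rw [this, hpa]
  -- KC2
  have KC2 : ∀ i, 1 ≤ i → i ≤ k → (w ^ i) b = (v ^ i) a := by
    intro i hi1 hik
    induction i with
    | zero => omega
    | succ i ih =>
      rcases Nat.eq_or_lt_of_le hi1 with h1 | h1
      · have : i = 0 := by omega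
        subst this
        simpa using wb
      · have hi1' : 1 ≤ i := by omega
        rw [pow_succ', Perm.mul_apply, ih hi1' (by omega), wx i (by omega) (by omega) (by omega)]
  constructor
  · -- split : ¬ w.SameCycle a b
    intro hWS
    obtain ⟨m, -, hm⟩ := hWS.exists_pow_eq'
    have hm' : (w ^ (m % (p - k))) a = b := by rw [← pow_mod_apply wpa m]; exact hm
    rcases Nat.eq_zero_or_pos (m % (p - k)) with h0 | h0
    · rw [h0] at hm'; exact hab (by simpa using hm')
    · have hlt : m % (p - k) < p - k := Nat.mod_lt m (by omega)
      rw [KC1 _ h0 (le_of_lt hlt)] at hm'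
      rw [← hka] at hm'
      exact hinj k (k + m % (p - k)) (by omega) (by omega) hm'.symm
  · -- coverage
    intro x hx
    obtain ⟨m, -, hm⟩ := hx.exists_pow_eq'
    have hm' : (v ^ (m % p)) a = x := by rw [← pow_mod_apply hpa m]; exact hm
    set j := m % p with hjdef
    have hjp : j < p := Nat.mod_lt m hp0
    rcases Nat.eq_zero_or_pos j with h0 | h0
    · left
      rw [h0] at hm'
      simp only [pow_zero] at hm'
      exact hm' ▸ Perm.SameCycle.refl w a
    · rcases le_or_gt j k with hjk | hjk
      · right
        exact sameCycle_of_nat_pow (by rw [KC2 j h0 hjk]; exact hm')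
      · left
        refine sameCycle_of_nat_pow (m := j - k) ?_
        rw [KC1 (j - k) (by omega) (by omega)]
        have : k + (j - k) = j := by omega
        rw [this]; exact hm'
end Split
variable {α : Type*} [Fintype α] [DecidableEq α]
set_option linter.unusedSectionVars false

variable {v : Perm α} {a b : α}

lemma refine_sameCycle (hS : v.SameCycle a b) :
    ∀ x y, (v * Equiv.swap a b).SameCycle x y → v.SameCycle x y := by
  apply sameCycle_pointwise
  intro x
  rcases eq_or_ne x a with rfl | hxa
  · rw [Perm.mul_apply, Equiv.swap_apply_left]
    exact (Perm.sameCycle_apply_right).mpr hS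
  rcases eq_or_ne x b with rfl | hxb
  · rw [Perm.mul_apply, Equiv.swap_apply_right]
    exact (Perm.sameCycle_apply_right).mpr hS.symm
  · rw [Perm.mul_apply, Equiv.swap_apply_of_ne_of_ne hxa hxb]
    exact (Perm.sameCycle_apply_right).mpr (Perm.SameCycle.refl v x)

lemma outside_sameCycle (hS : v.SameCycle a b) :
    ∀ x y, v.SameCycle x y → ¬ v.SameCycle a x → (v * Equiv.swap a b).SameCycle x y := by
  intro x y hxy hax
  obtain ⟨m, -, hm⟩ := hxy.exists_pow_eq'
  have key : ∀ i : ℕ, ((v * Equiv.swap a b) ^ i) x = (v ^ i) x := by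
    intro i
    induction i with
    | zero => simp
    | succ i ih =>
      have hia : (v ^ i) x ≠ a := fun h => hax (sameCycle_of_nat_pow h).symm
      have hib : (v ^ i) x ≠ b := fun h =>
        hax (hS.trans (sameCycle_of_nat_pow h).symm)
      rw [pow_succ', Perm.mul_apply, ih, Perm.mul_apply,
        Equiv.swap_apply_of_ne_of_ne hia hib, ← Perm.mul_apply, ← pow_succ']
  exact sameCycle_of_nat_pow (m := m) (key m ▸ hm)

lemma cyc_mul_swap_same (hab : a ≠ b) (hS : v.SameCycle a b) :
    cyc (v * Equiv.swap a b) = cyc v + 1 := by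
  obtain ⟨h3, h5⟩ := split_facts hab hS
  exact cyc_split v _ a b (refine_sameCycle hS) hS h3 (outside_sameCycle hS) h5

lemma cyc_mul_swap_diff (hab : a ≠ b) (hD : ¬ v.SameCycle a b) :
    cyc v = cyc (v * Equiv.swap a b) + 1 := by
  have hw := merge_sameCycle hab hD
  have h := cyc_mul_swap_same (v := v * Equiv.swap a b) hab hw
  rwa [mul_assoc, Equiv.swap_mul_self, mul_one] at h





variable {n : ℕ}

noncomputable def G (v : Perm (Fin n)) : ℤ := (n : ℤ) - cyc v

def pt0 (hn : 3 ≤ n) : Fin n := ⟨0, Nat.lt_of_lt_of_le (by decide) hn⟩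
def pt1 (hn : 3 ≤ n) : Fin n := ⟨1, Nat.lt_of_lt_of_le (by decide) hn⟩
def s0 (hn : 3 ≤ n) : Perm (Fin n) := Equiv.swap (pt0 hn) (pt1 hn)

noncomputable def Fv (hn : 3 ≤ n) (v : Perm (Fin n)) : ℤ := min (G v) (G (v * s0 hn))

lemma s0_def (hn : 3 ≤ n) : s0 hn = Equiv.swap (pt0 hn) (pt1 hn) := rfl

lemma hpt (hn : 3 ≤ n) : pt0 hn ≠ pt1 hn := by
  simp [pt0, pt1, Fin.ext_iff]

lemma G_nonneg (v : Perm (Fin n)) : 0 ≤ G v := by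
  have := cyc_le_card v
  rw [Fintype.card_fin] at this
  simp only [G]
  omega

lemma G_one : G (1 : Perm (Fin n)) = 0 := by
  simp [G, cyc_one]

lemma G_swap_same {v : Perm (Fin n)} {a b : Fin n} (hab : a ≠ b) (hS : v.SameCycle a b) :
    G (v * Equiv.swap a b) = G v - 1 := by
  simp only [G, cyc_mul_swap_same hab hS]
  push_cast
  ring

lemma G_swap_diff {v : Perm (Fin n)} {a b : Fin n} (hab : a ≠ b) (hD : ¬ v.SameCycle a b) :
    G (v * Equiv.swap a b) = G v + 1 := by
  have := cyc_mul_swap_diff hab hD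
  simp only [G]
  omega

lemma G_swap_ge {v : Perm (Fin n)} {a b : Fin n} (hab : a ≠ b) :
    G v - 1 ≤ G (v * Equiv.swap a b) := by
  by_cases hS : v.SameCycle a b
  · rw [G_swap_same hab hS]
  · rw [G_swap_diff hab hS]
    omega

lemma F_nonneg (hn : 3 ≤ n) (v : Perm (Fin n)) : 0 ≤ Fv hn v :=
  le_min (G_nonneg v) (G_nonneg _)

lemma mem_ATrans_iff (hn : 3 ≤ n) (t : Perm (Fin n)) :
    t ∈ ATrans n ↔ ∃ i j : Fin n, i ≠ j ∧ t = s0 hn * Equiv.swap i j := by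
  constructor
  · rintro ⟨h1, i, j, hij, rfl⟩
    exact ⟨i, j, ne_of_lt hij, rfl⟩
  · rintro ⟨i, j, hij, rfl⟩
    rcases lt_or_gt_of_ne hij with h | h
    · exact ⟨by omega, i, j, h, rfl⟩
    · exact ⟨by omega, j, i, h, by rw [Equiv.swap_comm]; rfl⟩

lemma conj_swap (hn : 3 ≤ n) (i j : Fin n) :
    s0 hn * Equiv.swap i j * s0 hn = Equiv.swap (s0 hn i) (s0 hn j) := by
  have hinv : (s0 hn)⁻¹ = s0 hn := Equiv.swap_inv _ _
  rw [Equiv.swap_apply_apply, hinv]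

lemma ATrans_inv (hn : 3 ≤ n) {t : Perm (Fin n)} (ht : t ∈ ATrans n) : t⁻¹ ∈ ATrans n := by
  rw [mem_ATrans_iff hn] at ht ⊢
  obtain ⟨i, j, hij, rfl⟩ := ht
  refine ⟨s0 hn i, s0 hn j, fun h => hij ((s0 hn).injective h), ?_⟩
  rw [← conj_swap hn, mul_inv_rev, ← mul_assoc]
  simp [s0, Equiv.swap_inv, Equiv.swap_mul_self]

lemma sign_ATrans (hn : 3 ≤ n) {t : Perm (Fin n)} (ht : t ∈ ATrans n) : Perm.sign t = 1 := by
  rw [mem_ATrans_iff hn] at ht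
  obtain ⟨i, j, hij, rfl⟩ := ht
  rw [map_mul, s0, sign_swap (hpt hn), sign_swap hij]
  decide

lemma word_step (hn : 3 ≤ n) {t : Perm (Fin n)} (ht : t ∈ ATrans n) (v : Perm (Fin n)) :
    Fv hn v - 1 ≤ Fv hn (v * t) := by
  rw [mem_ATrans_iff hn] at ht
  obtain ⟨i, j, hij, rfl⟩ := ht
  have h1 : G (v * s0 hn) - 1 ≤ G (v * (s0 hn * Equiv.swap i j)) := by
    rw [← mul_assoc]
    exact G_swap_ge hij
  have h2 : G v - 1 ≤ G (v * (s0 hn * Equiv.swap i j) * s0 hn) := by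
    have : v * (s0 hn * Equiv.swap i j) * s0 hn = v * Equiv.swap (s0 hn i) (s0 hn j) := by
      rw [← conj_swap hn, mul_assoc]
    rw [this]
    exact G_swap_ge (fun h => hij ((s0 hn).injective h))
  rw [Fv, Fv]
  omega


variable {n : ℕ}

lemma exists_ne_of_ne_one {v : Perm (Fin n)} (hv : v ≠ 1) : ∃ x, v x ≠ x := by
  by_contra h
  push_neg at h
  exact hv (Equiv.ext h)

lemma sameCycle_apply_one {v : Perm (Fin n)} {x : Fin n} : v.SameCycle x (v x) :=
  ⟨1, by simp⟩

lemma descent (hn : 3 ≤ n) {v : Perm (Fin n)} (hsgn : Perm.sign v = 1) (hv1 : v ≠ 1) :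
    ∃ t ∈ ATrans n, Perm.sign (v * t) = 1 ∧ Fv hn (v * t) = Fv hn v - 1 := by
  by_cases hS : v.SameCycle (pt0 hn) (pt1 hn)
  · -- Case B : 0 and 1 in the same cycle of v
    set u := v * s0 hn with hu
    have hu1 : u ≠ 1 := by
      intro h
      have hv' : v = s0 hn := by
        rw [eq_inv_of_mul_eq_one_left h]
        exact Equiv.swap_inv _ _
      rw [hv', s0, sign_swap (hpt hn)] at hsgn
      exact absurd hsgn (by decide)
    obtain ⟨x, hx⟩ := exists_ne_of_ne_one hu1
    have hxu : x ≠ u x := Ne.symm hx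
    refine ⟨s0 hn * Equiv.swap x (u x), (mem_ATrans_iff hn _).mpr ⟨x, u x, hxu, rfl⟩, ?_, ?_⟩
    · rw [map_mul, hsgn, one_mul, map_mul, s0, sign_swap (hpt hn), sign_swap hxu]
      decide
    · have hvt : v * (s0 hn * Equiv.swap x (u x)) = u * Equiv.swap x (u x) := by
        rw [hu, mul_assoc]
      have hGu : G u = G v - 1 := G_swap_same (hpt hn) hS
      have hG1 : G (u * Equiv.swap x (u x)) = G u - 1 :=
        G_swap_same hxu sameCycle_apply_one
      have hG2 : G v - 1 ≤ G (v * (s0 hn * Equiv.swap x (u x)) * s0 hn) := by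
        have heq : v * (s0 hn * Equiv.swap x (u x)) * s0 hn =
            v * Equiv.swap (s0 hn x) (s0 hn (u x)) := by
          rw [← conj_swap hn]
          group
        rw [heq]
        exact G_swap_ge (fun h => hxu ((s0 hn).injective h))
      rw [Fv, Fv, hvt, hG1, hGu, ← hvt]
      omega
  · -- Case A : 0 and 1 in different cycles of v
    obtain ⟨x, hx⟩ := exists_ne_of_ne_one hv1
    have hxv : x ≠ v x := Ne.symm hx
    have hne : s0 hn x ≠ s0 hn (v x) := fun h => hxv ((s0 hn).injective h)
    refine ⟨s0 hn * Equiv.swap (s0 hn x) (s0 hn (v x)),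
      (mem_ATrans_iff hn _).mpr ⟨_, _, hne, rfl⟩, ?_, ?_⟩
    · rw [map_mul, hsgn, one_mul, map_mul, sign_swap hne, s0_def, sign_swap (hpt hn)]
      decide
    · have hss : s0 hn * s0 hn = 1 := Equiv.swap_mul_self _ _
      have h1 : s0 hn * Equiv.swap (s0 hn x) (s0 hn (v x)) =
          Equiv.swap x (v x) * s0 hn := by
        rw [← conj_swap hn, ← mul_assoc, ← mul_assoc, hss, one_mul]
      have hvt : v * (s0 hn * Equiv.swap (s0 hn x) (s0 hn (v x))) =
          v * Equiv.swap x (v x) * s0 hn := by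
        rw [h1, ← mul_assoc]
      have hG1 : G (v * Equiv.swap x (v x)) = G v - 1 :=
        G_swap_same hxv sameCycle_apply_one
      have hnotS2 : ¬ (v * Equiv.swap x (v x)).SameCycle (pt0 hn) (pt1 hn) :=
        fun h => hS (refine_sameCycle sameCycle_apply_one _ _ h)
      have hG2 : G (v * Equiv.swap x (v x) * s0 hn) = G v := by
        rw [s0_def, G_swap_diff (hpt hn) hnotS2, hG1]
        ring
      have hG3 : G (v * s0 hn) = G v + 1 := by
        rw [s0_def, G_swap_diff (hpt hn) hS]
      have hback : v * Equiv.swap x (v x) * s0 hn * s0 hn = v * Equiv.swap x (v x) := by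
        rw [mul_assoc, hss, mul_one]
      rw [Fv, Fv, hvt, hback, hG1, hG2, hG3]
      omega


variable {n : ℕ}

lemma F_one_le (hn : 3 ≤ n) : Fv hn 1 ≤ 0 := by
  calc Fv hn 1 ≤ G 1 := min_le_left _ _
  _ = 0 := G_one

lemma list_bound (hn : 3 ≤ n) (l : List (Perm (Fin n))) (hl : ∀ x ∈ l, x ∈ ATrans n) :
    Fv hn l.prod ≤ l.length := by
  induction l using List.reverseRecOn with
  | nil => simpa using F_one_le hn
  | append_singleton l t ih =>
    have hl' : ∀ x ∈ l, x ∈ ATrans n := fun x hx => hl x (List.mem_append_left _ hx)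
    have ht : t ∈ ATrans n := hl t (List.mem_append_right _ (List.mem_singleton_self t))
    have hstep := word_step hn (ATrans_inv hn ht) (l.prod * t)
    rw [mul_assoc, mul_inv_cancel, mul_one] at hstep
    have := ih hl'
    rw [List.prod_append, List.prod_singleton, List.length_append, List.length_singleton]
    push_cast
    omega

lemma exists_word (hn : 3 ≤ n) : ∀ k : ℕ, ∀ v : Perm (Fin n), Perm.sign v = 1 →
    (Fv hn v).toNat = k →
    ∃ l : List (Perm (Fin n)), (∀ x ∈ l, x ∈ ATrans n) ∧ l.length = k ∧ l.prod = v := by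
  intro k
  induction k with
  | zero =>
    intro v hsgn hF
    rcases eq_or_ne v 1 with rfl | hv1
    · exact ⟨[], by simp, rfl, rfl⟩
    · exfalso
      obtain ⟨t, ht, -, hFt⟩ := descent hn hsgn hv1
      have h1 := F_nonneg hn v
      have h2 := F_nonneg hn (v * t)
      omega
  | succ k ih =>
    intro v hsgn hF
    have hv1 : v ≠ 1 := by
      rintro rfl
      rw [show Fv hn 1 = 0 from le_antisymm (F_one_le hn) (F_nonneg hn 1)] at hF
      simp at hF
    obtain ⟨t, ht, hsgn', hFt⟩ := descent hn hsgn hv1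
    have hFv : Fv hn v = (k : ℤ) + 1 := by
      have := F_nonneg hn v
      omega
    have hFt' : (Fv hn (v * t)).toNat = k := by rw [hFt, hFv]; omega
    obtain ⟨l, hl, hlen, hprod⟩ := ih (v * t) hsgn' hFt'
    refine ⟨l ++ [t⁻¹], ?_, ?_, ?_⟩
    · intro x hx
      rcases List.mem_append.mp hx with h | h
      · exact hl x h
      · rw [List.mem_singleton.mp h]
        exact ATrans_inv hn ht
    · simp [hlen]
    · rw [List.prod_append, List.prod_singleton, hprod, mul_assoc, mul_inv_cancel, mul_one]


variable {n : ℕ}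

lemma cyc_eq (n : ℕ) (v : Perm (Fin n)) : cyc v = cycNum n v := rfl

lemma alen_eq (hn : 3 ≤ n) (v : Perm (Fin n)) (hsgn : Perm.sign v = 1) :
    alen n v = (Fv hn v).toNat := by
  obtain ⟨l, hl, hlen, hprod⟩ := exists_word hn _ v hsgn rfl
  refine le_antisymm (Nat.sInf_le ⟨l, hl, hlen, hprod⟩) ?_
  refine le_csInf ⟨_, l, hl, hlen, hprod⟩ ?_
  rintro k ⟨l', hl', rfl, rfl⟩
  exact Int.toNat_le.mpr (list_bound hn l' hl')


end AProof

/-- For `n ≥ 3` and `v ∈ A_n`: if `1, 2` lie in different cycles of `v` then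
`ℓ(v) = n - cyc(v)`, and if they lie in the same cycle then `ℓ(v) = n - cyc(v) - 1`. -/
theorem stmt_10 (n : ℕ) (hn : 3 ≤ n) (v : Equiv.Perm (Fin n))
    (hv : v ∈ alternatingGroup (Fin n)) :
    (¬ v.SameCycle ⟨0, by omega⟩ ⟨1, by omega⟩ → alen n v = n - cycNum n v) ∧
    (v.SameCycle ⟨0, by omega⟩ ⟨1, by omega⟩ → alen n v = n - cycNum n v - 1) := by
  have hsgn : Equiv.Perm.sign v = 1 := Equiv.Perm.mem_alternatingGroup.mp hv
  have hcyc : AProof.cyc v = cycNum n v := AProof.cyc_eq n v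
  have hcycle : AProof.cyc v ≤ n := by
    have := AProof.cyc_le_card v
    rwa [Fintype.card_fin] at this
  have halen := AProof.alen_eq hn v hsgn
  have hGdef : AProof.G v = (n : ℤ) - AProof.cyc v := rfl
  constructor
  · intro hnot
    have hnot' : ¬ v.SameCycle (AProof.pt0 hn) (AProof.pt1 hn) := hnot
    have hGs : AProof.G (v * AProof.s0 hn) = AProof.G v + 1 := by
      rw [AProof.s0_def, AProof.G_swap_diff (AProof.hpt hn) hnot']
    have hF : AProof.Fv hn v = AProof.G v := by
      rw [AProof.Fv, hGs]
      omega
    rw [halen, hF, hGdef, hcyc]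
    omega
  · intro hsame
    have hsame' : v.SameCycle (AProof.pt0 hn) (AProof.pt1 hn) := hsame
    have hGs : AProof.G (v * AProof.s0 hn) = AProof.G v - 1 := by
      rw [AProof.s0_def, AProof.G_swap_same (AProof.hpt hn) hsame']
    have hle : AProof.cyc v ≤ n - 1 := by
      have := AProof.cyc_le_of_sameCycle v (AProof.hpt hn) hsame'
      rwa [Fintype.card_fin] at this
    have hF : AProof.Fv hn v = AProof.G v - 1 := by
      rw [AProof.Fv, hGs]
      omega
    rw [halen, hF, hGdef, hcyc]
    omega
end

section
/- For every n ≥ 3 and every v ∈ A_n, the reflection length of v in the symmetric group satisfies: ℓ_T(v) = ℓ(v) if ℓ(v) is even, and ℓ_T(v) = ℓ(v) + 1 if ℓ(v) is odd. In particular ℓ_T(v) is always even for v ∈ A_n. -/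
/-- The reflection length in `S_n`: the minimal number of transpositions whose product
is `v`. -/
noncomputable def tlen (n : ℕ) (v : Equiv.Perm (Fin n)) : ℕ :=
  sInf {k | ∃ l : List (Equiv.Perm (Fin n)),
    (∀ x ∈ l, x.IsSwap) ∧ l.length = k ∧ l.prod = v}


section Aux

variable {n : ℕ}

/-- abbreviation for the distinguished transposition (1 2) -/
def sig (hn : 1 < n) : Equiv.Perm (Fin n) :=
  Equiv.swap (⟨0, by omega⟩ : Fin n) ⟨1, hn⟩

lemma sig_ne (hn : 1 < n) : (⟨0, by omega⟩ : Fin n) ≠ ⟨1, hn⟩ := by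
  simp [Fin.ext_iff]

lemma sig_isSwap (hn : 1 < n) : (sig hn).IsSwap := ⟨_, _, sig_ne hn, rfl⟩

lemma sig_mul_self (hn : 1 < n) : sig hn * sig hn = 1 := Equiv.swap_mul_self _ _

lemma mem_ATrans (hn : 1 < n) {x y : Fin n} (hxy : x ≠ y) :
    sig hn * Equiv.swap x y ∈ ATrans n := by
  rcases hxy.lt_or_gt with h | h
  · exact ⟨hn, x, y, h, rfl⟩
  · exact ⟨hn, y, x, h, by rw [Equiv.swap_comm y x]; rfl⟩

lemma ATrans_form (hn : 1 < n) {a : Equiv.Perm (Fin n)} (ha : a ∈ ATrans n) :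
    ∃ x y : Fin n, x ≠ y ∧ a = sig hn * Equiv.swap x y := by
  obtain ⟨h1, i, j, hij, rfl⟩ := ha
  exact ⟨i, j, hij.ne, rfl⟩

/-- Pairing lemma: an even-length list of swaps is matched by an ATrans list of the
same length and product. -/
lemma pairing (hn : 1 < n) : ∀ (l : List (Equiv.Perm (Fin n))),
    (∀ x ∈ l, x.IsSwap) → Even l.length →
    ∃ l' : List (Equiv.Perm (Fin n)),
      (∀ x ∈ l', x ∈ ATrans n) ∧ l'.length = l.length ∧ l'.prod = l.prod
  | [] => fun _ _ => ⟨[], by simp⟩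
  | [t] => fun _ h => by simp at h
  | t1 :: t2 :: rest => fun hsw hev => by
      obtain ⟨l', h1, h2, h3⟩ := pairing hn rest
        (fun x hx => hsw x (by simp [hx])) (by
          simp only [List.length_cons] at hev
          obtain ⟨c, hc⟩ := hev
          exact ⟨c - 1, by omega⟩)
      obtain ⟨x, y, hxy, rfl⟩ := hsw t1 (by simp)
      obtain ⟨c, d, hcd, rfl⟩ := hsw t2 (by simp)
      refine ⟨(sig hn * Equiv.swap ((sig hn) x) ((sig hn) y)) ::
              (sig hn * Equiv.swap c d) :: l', ?_, by simp [h2], ?_⟩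
      · intro z hz
        simp only [List.mem_cons] at hz
        rcases hz with rfl | rfl | hz
        · exact mem_ATrans hn (fun h => hxy ((sig hn).injective h))
        · exact mem_ATrans hn hcd
        · exact h1 z hz
      · simp only [List.prod_cons, h3]
        have hconj : Equiv.swap ((sig hn) x) ((sig hn) y)
            = sig hn * Equiv.swap x y * (sig hn)⁻¹ := Equiv.swap_apply_apply _ _ _
        rw [hconj]
        have hinv : (sig hn)⁻¹ = sig hn := Equiv.swap_inv _ _
        rw [hinv]
        have h4 := sig_mul_self hn
        simp only [← mul_assoc]
        rw [h4]
        simp only [one_mul]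
        rw [mul_assoc (Equiv.swap x y) (sig hn) (sig hn), h4, mul_one]

lemma sig_inv (hn : 1 < n) : (sig hn)⁻¹ = sig hn := Equiv.swap_inv _ _

/-- Push lemma: a list of ATrans elements of length k has product `σ^k * w` where `w`
is a product of k swaps. -/
lemma push (hn : 1 < n) : ∀ (l : List (Equiv.Perm (Fin n))),
    (∀ x ∈ l, x ∈ ATrans n) →
    ∃ l' : List (Equiv.Perm (Fin n)),
      (∀ x ∈ l', x.IsSwap) ∧ l'.length = l.length ∧
      l.prod = sig hn ^ l.length * l'.prod
  | [] => fun _ => ⟨[], by simp⟩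
  | a :: rest => fun h => by
      obtain ⟨l', h1, h2, h3⟩ := push hn rest (fun x hx => h x (by simp [hx]))
      obtain ⟨x, y, hxy, rfl⟩ := ATrans_form hn (h a List.mem_cons_self)
      set g := sig hn ^ rest.length with hg
      refine ⟨Equiv.swap (g⁻¹ x) (g⁻¹ y) :: l', ?_, by simp [h2], ?_⟩
      · intro z hz
        rcases List.mem_cons.1 hz with rfl | hz
        · exact ⟨_, _, fun hc => hxy (g⁻¹.injective hc), rfl⟩
        · exact h1 z hz
      · simp only [List.prod_cons, h3, List.length_cons]
        have key : Equiv.swap x y * g = g * Equiv.swap (g⁻¹ x) (g⁻¹ y) := by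
          have := Equiv.mul_swap_eq_swap_mul g (g⁻¹ x) (g⁻¹ y)
          simp only [← Equiv.Perm.mul_apply, mul_inv_cancel, Equiv.Perm.one_apply] at this
          rw [this]
        calc sig hn * Equiv.swap x y * (g * l'.prod)
            = sig hn * (Equiv.swap x y * g) * l'.prod := by group
          _ = sig hn * (g * Equiv.swap (g⁻¹ x) (g⁻¹ y)) * l'.prod := by rw [key]
          _ = sig hn ^ (rest.length + 1) * (Equiv.swap (g⁻¹ x) (g⁻¹ y) * l'.prod) := by
              rw [hg, pow_succ']; group

end Aux

section Main

variable {n : ℕ}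

lemma even_of_mem_tlenSet (hv : v ∈ alternatingGroup (Fin n))
    {k : ℕ} (hk : k ∈ {k | ∃ l : List (Equiv.Perm (Fin n)),
      (∀ x ∈ l, x.IsSwap) ∧ l.length = k ∧ l.prod = v}) : Even k := by
  obtain ⟨l, hl1, rfl, rfl⟩ := hk
  have hs := Equiv.Perm.sign_prod_list_swap hl1
  rw [Equiv.Perm.mem_alternatingGroup.1 hv] at hs
  rw [← neg_one_pow_eq_one_iff_even (R := ℤˣ) (by decide)]
  exact hs.symm

lemma tlenSet_nonempty (v : Equiv.Perm (Fin n)) :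
    ({k | ∃ l : List (Equiv.Perm (Fin n)),
      (∀ x ∈ l, x.IsSwap) ∧ l.length = k ∧ l.prod = v}).Nonempty := by
  obtain ⟨l, hl1, hl2⟩ := (Equiv.Perm.truncSwapFactors v).out
  exact ⟨l.length, l, hl2, rfl, hl1⟩

/-- For `n ≥ 3` and `v ∈ A_n`: `ℓ_T(v) = ℓ(v)` if `ℓ(v)` is even, `ℓ_T(v) = ℓ(v) + 1`
if `ℓ(v)` is odd; in particular `ℓ_T(v)` is always even. -/
theorem stmt_11 (n : ℕ) (hn : 3 ≤ n) (v : Equiv.Perm (Fin n))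
    (hv : v ∈ alternatingGroup (Fin n)) :
    (Even (alen n v) → tlen n v = alen n v) ∧
    (Odd (alen n v) → tlen n v = alen n v + 1) ∧
    Even (tlen n v) := by
  have hn1 : 1 < n := by omega
  set S := {k | ∃ l : List (Equiv.Perm (Fin n)),
      (∀ x ∈ l, x.IsSwap) ∧ l.length = k ∧ l.prod = v} with hS
  set A := {k | ∃ l : List (Equiv.Perm (Fin n)),
      (∀ x ∈ l, x ∈ ATrans n) ∧ l.length = k ∧ l.prod = v} with hA
  have hSne : S.Nonempty := tlenSet_nonempty v
  have htlen_mem : tlen n v ∈ S := Nat.sInf_mem hSne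
  have htlen_even : Even (tlen n v) := even_of_mem_tlenSet hv htlen_mem
  -- alen ≤ tlen
  obtain ⟨l, hl1, hl2, hl3⟩ := htlen_mem
  obtain ⟨l', ha1, ha2, ha3⟩ := pairing hn1 l hl1 (by rw [hl2]; exact htlen_even)
  have hAne : A.Nonempty := ⟨l'.length, l', ha1, rfl, ha3.trans hl3⟩
  have halen_le : alen n v ≤ tlen n v := by
    have : tlen n v ∈ A := ⟨l', ha1, ha2.trans hl2, ha3.trans hl3⟩
    exact Nat.sInf_le this
  -- the push: tlen ≤ alen (alen even) or tlen ≤ alen + 1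
  have halen_mem : alen n v ∈ A := Nat.sInf_mem hAne
  obtain ⟨m, hm1, hm2, hm3⟩ := halen_mem
  obtain ⟨w, hw1, hw2, hw3⟩ := push hn1 m hm1
  have hparity : Even (alen n v) → tlen n v ≤ alen n v := by
    intro he
    have hpow : sig hn1 ^ m.length = 1 := by
      rw [hm2]
      obtain ⟨c, hc⟩ := he
      rw [hc, ← two_mul, pow_mul]
      simp [sq, sig_mul_self hn1]
    have : v = w.prod := by rw [← hm3, hw3, hpow, one_mul]
    exact Nat.sInf_le ⟨w, hw1, hw2.trans hm2, this.symm⟩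
  have hparity' : Odd (alen n v) → tlen n v ≤ alen n v + 1 := by
    intro ho
    have hpow : sig hn1 ^ m.length = sig hn1 := by
      rw [hm2]
      obtain ⟨c, hc⟩ := ho
      rw [hc, pow_succ, pow_mul]
      simp [sq, sig_mul_self hn1]
    have : v = (sig hn1 :: w).prod := by
      rw [List.prod_cons, ← hm3, hw3, hpow]
    refine Nat.sInf_le ⟨sig hn1 :: w, ?_, by simp [hw2, hm2], this.symm⟩
    intro x hx
    rcases List.mem_cons.1 hx with rfl | hx
    · exact sig_isSwap hn1
    · exact hw1 x hx
  refine ⟨fun he => le_antisymm (hparity he) halen_le, fun ho => ?_, htlen_even⟩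
  have h1 := hparity' ho
  have hne : tlen n v ≠ alen n v := fun h =>
    (Nat.not_even_iff_odd.2 ho) (h ▸ htlen_even)
  omega

end Main
end
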